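/- arXiv:2012.01090 — 4 statements merged into one kernel-verified Lean document; each statement's English description precedes it below -/
import Mathlib

section
/- Let T be a tree on n vertices with exactly s cut vertices, where 1 ≤ s ≤ n−2. Then for every 1 ≤ l ≤ n−s−1, ε(T) ≤ ε(T(l, n−l−s, s)). -/
open SimpleGraph

/-- The eccentricity of a vertex: maximum distance to any vertex. -/
noncomputable def ecc {V : Type*} (G : SimpleGraph V) (v : V) : ℕ :=
  ⨆ u, G.dist v u

/-- The total eccentricity index: sum of eccentricities of all vertices. -/
noncomputable def totalEcc {V : Type*} [Fintype V] (G : SimpleGraph V) : ℕ :=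
  ∑ v, ecc G v

/-- A pendant vertex: a vertex of degree one, i.e. with exactly one neighbour. -/
def IsPendant {V : Type*} (G : SimpleGraph V) (v : V) : Prop :=
  ∃! u, G.Adj v u

/-- A cut vertex: a vertex whose removal disconnects the graph. -/
def IsCutVertex {V : Type*} (G : SimpleGraph V) (w : V) : Prop :=
  ¬ (G.induce {v | v ≠ w}).Connected

/-- distance between two subgraphs -/
noncomputable def subgraphDist {V : Type*} (G : SimpleGraph V) (B B' : G.Subgraph) : ℕ :=
  sInf {d | ∃ u ∈ B.verts, ∃ w ∈ B'.verts, G.dist u w = d}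

/-- A 2-connected subgraph: at least two vertices, connected, and no cut vertex. -/
def TwoConn {V : Type*} {G : SimpleGraph V} (H : G.Subgraph) : Prop :=
  2 ≤ H.verts.ncard ∧ H.coe.Connected ∧ ∀ w, ¬ IsCutVertex H.coe w

/-- A block: a maximal 2-connected subgraph. -/
def IsBlock {V : Type*} {G : SimpleGraph V} (H : G.Subgraph) : Prop :=
  TwoConn H ∧ ∀ H' : G.Subgraph, H ≤ H' → TwoConn H' → H' = H

/-- A pendant block: a block containing exactly one cut vertex of `G`. -/
def IsPendantBlock {V : Type*} (G : SimpleGraph V) (H : G.Subgraph) : Prop :=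
  ∃! w, w ∈ H.verts ∧ IsCutVertex G w

/-- `G_{k,l}`: the graph obtained from `G` by attaching two new paths,
with `k` resp. `l` new vertices, at the vertex `v`. -/
def attachTwoPaths {V : Type*} (G : SimpleGraph V) (v : V) (k l : ℕ) :
    SimpleGraph (V ⊕ (Fin k ⊕ Fin l)) :=
  SimpleGraph.fromRel (fun p q =>
    match p, q with
    | .inl x, .inl y => G.Adj x y
    | .inl x, .inr (.inl i) => x = v ∧ i.val = 0
    | .inl x, .inr (.inr i) => x = v ∧ i.val = 0
    | .inr (.inl i), .inr (.inl j) => i.val + 1 = j.val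
    | .inr (.inr i), .inr (.inr j) => i.val + 1 = j.val
    | _, _ => False)

/-- The graph obtained from `H1`, `H2` and the path `P_d = v_1 v_2 … v_d` by identifying
`u ∈ V(H1)`, `v ∈ V(H2)` and `v_1` into a single vertex.  The `Fin (d-1)` part records the
path vertices `v_2, …, v_d`. -/
def glueMid {V1 V2 : Type*} (H1 : SimpleGraph V1) (H2 : SimpleGraph V2)
    (u : V1) (v : V2) (d : ℕ) :
    SimpleGraph (V1 ⊕ ({x : V2 // x ≠ v} ⊕ Fin (d - 1))) :=
  SimpleGraph.fromRel (fun p q =>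
    match p, q with
    | .inl x, .inl y => H1.Adj x y
    | .inl x, .inr (.inl y) => x = u ∧ H2.Adj v y.1
    | .inl x, .inr (.inr i) => x = u ∧ i.val = 0
    | .inr (.inl x), .inr (.inl y) => H2.Adj x.1 y.1
    | .inr (.inr i), .inr (.inr j) => i.val + 1 = j.val
    | _, _ => False)

/-- The graph obtained from `H1`, `H2` and the path `P_d = v_1 v_2 … v_d` by identifying
`u ∈ V(H1)` with `v_1` and `v ∈ V(H2)` with `v_d`.  The `Fin (d-1)` part records the path
vertices `v_2, …, v_d` (the last one being identified with `v`). -/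
def glueEnds {V1 V2 : Type*} (H1 : SimpleGraph V1) (H2 : SimpleGraph V2)
    (u : V1) (v : V2) (d : ℕ) :
    SimpleGraph (V1 ⊕ ({x : V2 // x ≠ v} ⊕ Fin (d - 1))) :=
  SimpleGraph.fromRel (fun p q =>
    match p, q with
    | .inl x, .inl y => H1.Adj x y
    | .inl x, .inr (.inr i) => x = u ∧ i.val = 0
    | .inr (.inl x), .inr (.inl y) => H2.Adj x.1 y.1
    | .inr (.inr i), .inr (.inl y) => i.val + 1 = d - 1 ∧ H2.Adj v y.1
    | .inr (.inr i), .inr (.inr j) => i.val + 1 = j.val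
    | _, _ => False)

/-- `U_{n,g}^l`: the unicyclic graph on `n` vertices obtained by joining one end vertex of
the path `P_{n-g}` to a vertex of the cycle `C_g` by an edge. -/
def UnlGraph (n g : ℕ) : SimpleGraph (Fin (n - g) ⊕ Fin g) :=
  SimpleGraph.fromRel (fun p q =>
    match p, q with
    | .inl i, .inl j => i.val + 1 = j.val
    | .inl i, .inr j => i.val + 1 = n - g ∧ j.val = 0
    | .inr i, .inr j => i.val + 1 = j.val ∨ (i.val = 0 ∧ j.val + 1 = g)
    | _, _ => False)

/-- `U_{n,g}^p`: the unicyclic graph on `n` vertices obtained by attaching `n - g` pendant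
vertices to one vertex of the cycle `C_g`. -/
def UnpGraph (n g : ℕ) : SimpleGraph (Fin g ⊕ Fin (n - g)) :=
  SimpleGraph.fromRel (fun p q =>
    match p, q with
    | .inl i, .inl j => i.val + 1 = j.val ∨ (i.val = 0 ∧ j.val + 1 = g)
    | .inl i, .inr _ => i.val = 0
    | _, _ => False)

/-- The graph obtained by joining the vertex `u` of `H` to the pendant vertex of
`U_{r,g}^l` by an edge. -/
def joinPendant {V : Type*} (H : SimpleGraph V) (u : V) (r g : ℕ) :
    SimpleGraph (V ⊕ (Fin (r - g) ⊕ Fin g)) :=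
  SimpleGraph.fromRel (fun p q =>
    match p, q with
    | .inl x, .inl y => H.Adj x y
    | .inl x, .inr (.inl i) => x = u ∧ i.val = 0
    | .inr a, .inr b => (UnlGraph r g).Adj a b
    | _, _ => False)

/-- `C_{m1,m2}^n` in the case `n = m1 + m2 - 1`: two cycles `C_{m1}` and `C_{m2}`
sharing exactly one vertex (the vertex `0`). -/
def twoCyclesGlued (m1 m2 : ℕ) : SimpleGraph (Fin (m1 + m2 - 1)) :=
  SimpleGraph.fromRel (fun i j =>
    (i.val + 1 = j.val ∧ j.val < m1) ∨ (i.val = 0 ∧ j.val + 1 = m1)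
    ∨ (i.val = 0 ∧ j.val = m1) ∨ (m1 ≤ i.val ∧ i.val + 1 = j.val)
    ∨ (i.val = 0 ∧ j.val + 2 = m1 + m2))

/-- `C_{3,3}^n` for `n > 5`: two triangles `{0,1,2}` and `{n-3,n-2,n-1}` joined by the path
`2, 3, …, n-3` (a path on `n - 4` vertices whose ends are identified with a vertex of each
triangle). -/
def C33 (n : ℕ) : SimpleGraph (Fin n) :=
  SimpleGraph.fromRel (fun i j =>
    (i.val = 0 ∧ j.val = 1) ∨ (i.val = 0 ∧ j.val = 2) ∨ (i.val = 1 ∧ j.val = 2)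
    ∨ (2 ≤ i.val ∧ i.val + 1 = j.val ∧ j.val + 3 ≤ n)
    ∨ (i.val + 3 = n ∧ j.val + 2 = n) ∨ (i.val + 2 = n ∧ j.val + 1 = n)
    ∨ (i.val + 3 = n ∧ j.val + 1 = n))

/-- `T(l, m, d)`: the tree obtained from the path `P_d` by attaching `l` pendant vertices at
one end and `m` pendant vertices at the other end. -/
def Tlmd (l m d : ℕ) : SimpleGraph (Fin d ⊕ (Fin l ⊕ Fin m)) :=
  SimpleGraph.fromRel (fun p q =>
    match p, q with
    | .inl i, .inl j => i.val + 1 = j.val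
    | .inl i, .inr (.inl _) => i.val = 0
    | .inl i, .inr (.inr _) => i.val + 1 = d
    | _, _ => False)

/-- `K_m^n(l_1, …, l_m)`: the graph obtained from the complete graph `K_m` by identifying,
for each `i`, one end vertex of a path on `l i` vertices with the `i`-th vertex of `K_m`.
The vertex `⟨i, 0⟩` is the `i`-th vertex of the complete graph. -/
def Kmn (m : ℕ) (l : Fin m → ℕ) : SimpleGraph ((i : Fin m) × Fin (l i)) :=
  SimpleGraph.fromRel (fun p q =>
    (p.1 = q.1 ∧ p.2.val + 1 = q.2.val) ∨ (p.1 ≠ q.1 ∧ p.2.val = 0 ∧ q.2.val = 0))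

/-- The graph obtained from `H`, `C_{m1}` and `C_{m2}` by identifying the vertex `w` of `H`,
a vertex of `C_{m1}` and a vertex of `C_{m2}` into one vertex. -/
def glueTwoCycles {V : Type*} (H : SimpleGraph V) (w : V) (m1 m2 : ℕ) :
    SimpleGraph (V ⊕ (Fin (m1 - 1) ⊕ Fin (m2 - 1))) :=
  SimpleGraph.fromRel (fun p q =>
    match p, q with
    | .inl x, .inl y => H.Adj x y
    | .inl x, .inr (.inl i) => x = w ∧ (i.val = 0 ∨ i.val + 2 = m1)
    | .inl x, .inr (.inr i) => x = w ∧ (i.val = 0 ∨ i.val + 2 = m2)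
    | .inr (.inl i), .inr (.inl j) => i.val + 1 = j.val
    | .inr (.inr i), .inr (.inr j) => i.val + 1 = j.val
    | _, _ => False)

/-- The graph obtained from `H` and the cycle `C_M` by identifying the vertex `w` of `H`
with one vertex of the cycle. -/
def glueOneCycle {V : Type*} (H : SimpleGraph V) (w : V) (M : ℕ) :
    SimpleGraph (V ⊕ Fin (M - 1)) :=
  SimpleGraph.fromRel (fun p q =>
    match p, q with
    | .inl x, .inl y => H.Adj x y
    | .inl x, .inr i => x = w ∧ (i.val = 0 ∨ i.val + 2 = M)
    | .inr i, .inr j => i.val + 1 = j.val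
    | _, _ => False)


section Aux
variable {V : Type*} {G : SimpleGraph V}

private lemma aux_walk_lip (f : V → ℤ) (hf : ∀ x y, G.Adj x y → |f x - f y| ≤ 1)
    {u v : V} (w : G.Walk u v) : |f u - f v| ≤ (w.length : ℤ) := by
  induction w with
  | nil => simp
  | @cons a b c h p ih =>
    have h1 := hf _ _ h
    have h2 := abs_sub_le (f a) (f b) (f c)
    simp only [Walk.length_cons]
    push_cast
    linarith

private lemma aux_dist_lip (f : V → ℤ) (hf : ∀ x y, G.Adj x y → |f x - f y| ≤ 1)
    {u v : V} (h : G.Reachable u v) : |f u - f v| ≤ (G.dist u v : ℤ) := by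
  obtain ⟨w, hw⟩ := h.exists_walk_length_eq_dist
  have := aux_walk_lip f hf w
  rwa [hw] at this

private lemma aux_getVert_mem_support {u v : V} (p : G.Walk u v) (i : ℕ) :
    p.getVert i ∈ p.support := by
  induction p generalizing i with
  | nil => rw [Walk.getVert_of_length_le _ (by simp)]; simp [SimpleGraph.dist_self]
  | cons h p ih =>
    cases i with
    | zero => simp [Walk.getVert_zero, SimpleGraph.dist_self]
    | succ n =>
      rw [Walk.getVert_cons_succ, Walk.support_cons]
      exact List.mem_cons_of_mem _ (ih n)

private lemma aux_dist_getVert_le [DecidableEq V] {u v : V} (p : G.Walk u v) (i : ℕ) :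
    G.dist u (p.getVert i) ≤ i := by
  induction p generalizing i with
  | nil => rw [Walk.getVert_of_length_le _ (by simp)]; simp [SimpleGraph.dist_self]
  | @cons a b c h p ih =>
    cases i with
    | zero => simp [Walk.getVert_zero, SimpleGraph.dist_self]
    | succ n =>
      rw [Walk.getVert_cons_succ]
      have hr : G.Reachable b (p.getVert n) := ⟨p.takeUntil _ (aux_getVert_mem_support p n)⟩
      obtain ⟨w, hw⟩ := hr.exists_walk_length_eq_dist
      calc G.dist a (p.getVert n) ≤ (Walk.cons h w).length := SimpleGraph.dist_le _
        _ = G.dist b (p.getVert n) + 1 := by simp [hw]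
        _ ≤ n + 1 := by have := ih n; omega

private lemma aux_geo_getVert [DecidableEq V] (hc : G.Connected) {x y : V} (p : G.Walk x y)
    (hp : p.length = G.dist x y) {i : ℕ} (hi : i ≤ p.length) :
    G.dist x (p.getVert i) = i ∧ G.dist (p.getVert i) y = p.length - i := by
  have h1 : G.dist x (p.getVert i) ≤ i := aux_dist_getVert_le p i
  have h2 : G.dist (p.getVert i) y ≤ p.length - i := by
    have h := aux_dist_getVert_le p.reverse (p.length - i)
    rw [Walk.getVert_reverse] at h
    have hii : p.length - (p.length - i) = i := by omega
    rw [hii] at h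
    rwa [SimpleGraph.dist_comm]
  have h3 := hc.dist_triangle (u := x) (v := p.getVert i) (w := y)
  omega

private lemma aux_geo_split [DecidableEq V] (hc : G.Connected) {x y m : V} (p : G.Walk x y)
    (hp : p.length = G.dist x y) (hm : m ∈ p.support) :
    G.dist x m + G.dist m y = G.dist x y ∧
    (p.takeUntil m hm).length = G.dist x m ∧ (p.dropUntil m hm).length = G.dist m y := by
  have h1 : G.dist x m ≤ (p.takeUntil m hm).length := SimpleGraph.dist_le _
  have h2 : G.dist m y ≤ (p.dropUntil m hm).length := SimpleGraph.dist_le _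
  have h3 : (p.takeUntil m hm).length + (p.dropUntil m hm).length = p.length := by
    have h4 := congrArg Walk.length (p.take_spec hm)
    rwa [Walk.length_append] at h4
  have h4 := hc.dist_triangle (u := x) (v := m) (w := y)
  omega

end Aux


section Aux
variable {V : Type*} {G : SimpleGraph V}

private lemma aux_geo_split' [DecidableEq V] (hc : G.Connected) {x y m : V} (p : G.Walk x y)
    (hp : p.length = G.dist x y) (hm : m ∈ p.support) :
    G.dist x m + G.dist m y = G.dist x y ∧
    (p.takeUntil m hm).length = G.dist x m ∧ (p.dropUntil m hm).length = G.dist m y := by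
  have h1 : G.dist x m ≤ (p.takeUntil m hm).length := SimpleGraph.dist_le _
  have h2 : G.dist m y ≤ (p.dropUntil m hm).length := SimpleGraph.dist_le _
  have h3 : (p.takeUntil m hm).length + (p.dropUntil m hm).length = p.length := by
    have h4 := congrArg Walk.length (p.take_spec hm)
    rwa [Walk.length_append] at h4
  have h4 := hc.dist_triangle (u := x) (v := m) (w := y)
  omega

private lemma aux_median_aux [DecidableEq V] (hT : G.IsTree) :
    ∀ (N : ℕ) (c a b : V) (p : G.Walk c a) (q : G.Walk c b),
      p.length = G.dist c a → q.length = G.dist c b → p.length + q.length ≤ N →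
      ∃ m : V, G.dist a m + G.dist m b = G.dist a b ∧
        G.dist a m + G.dist m c = G.dist a c ∧ G.dist b m + G.dist m c = G.dist b c := by
  intro N
  induction N with
  | zero =>
    intro c a b p q hp hq hN
    cases p with
    | nil => exact ⟨c, by simp [SimpleGraph.dist_self, SimpleGraph.dist_comm]⟩
    | cons h p' => simp [Walk.length_cons] at hN
  | succ N ih =>
    intro c a b p q hp hq hN
    cases p with
    | nil => exact ⟨c, by simp [SimpleGraph.dist_self, SimpleGraph.dist_comm]⟩
    | @cons c x a h p' =>
      cases q with
      | nil => exact ⟨c, by simp [SimpleGraph.dist_self, SimpleGraph.dist_comm]⟩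
      | @cons c y b h' q' =>
        have hpl : p'.length + 1 = G.dist c a := by simpa [Walk.length_cons] using hp
        have hql : q'.length + 1 = G.dist c b := by simpa [Walk.length_cons] using hq
        have hcx : G.dist c x ≤ 1 := by
          have := SimpleGraph.dist_le (Walk.cons h (Walk.nil : G.Walk x x)); simpa using this
        have hcy : G.dist c y ≤ 1 := by
          have := SimpleGraph.dist_le (Walk.cons h' (Walk.nil : G.Walk y y)); simpa using this
        have hxa : G.dist x a = p'.length := by
          have l1 : G.dist x a ≤ p'.length := SimpleGraph.dist_le _
          have l2 := hT.isConnected.dist_triangle (u := c) (v := x) (w := a)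
          omega
        have hyb : G.dist y b = q'.length := by
          have l1 : G.dist y b ≤ q'.length := SimpleGraph.dist_le _
          have l2 := hT.isConnected.dist_triangle (u := c) (v := y) (w := b)
          omega
        by_cases hxy : x = y
        · subst hxy
          obtain ⟨m, e1, e2, e3⟩ := ih x a b p' q' hxa.symm hyb.symm
            (by simp only [Walk.length_cons] at hN; omega)
          have cax : G.dist a x = G.dist x a := SimpleGraph.dist_comm
          have cbx : G.dist b x = G.dist x b := SimpleGraph.dist_comm
          have cac : G.dist a c = G.dist c a := SimpleGraph.dist_comm
          have cbc : G.dist b c = G.dist c b := SimpleGraph.dist_comm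
          have cxc : G.dist x c = G.dist c x := SimpleGraph.dist_comm
          have t1 : G.dist m c ≤ G.dist m x + G.dist x c :=
            hT.isConnected.dist_triangle
          have t2 : G.dist a c ≤ G.dist a m + G.dist m c :=
            hT.isConnected.dist_triangle
          have t3 : G.dist b c ≤ G.dist b m + G.dist m c :=
            hT.isConnected.dist_triangle
          have hxb : G.dist x b = q'.length := hyb
          exact ⟨m, e1, by omega, by omega⟩
        · refine ⟨c, ?_, by simp [SimpleGraph.dist_self], by simp [SimpleGraph.dist_self]⟩
          have hppath : (Walk.cons h p').IsPath := Walk.isPath_of_length_eq_dist _ hp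
          have hqpath : (Walk.cons h' q').IsPath := Walk.isPath_of_length_eq_dist _ hq
          have hp'path : p'.IsPath := (Walk.cons_isPath_iff _ _).1 hppath |>.1
          have hq'path : q'.IsPath := (Walk.cons_isPath_iff _ _).1 hqpath |>.1
          have hcp' : c ∉ p'.support := (Walk.cons_isPath_iff _ _).1 hppath |>.2
          have hcq' : c ∉ q'.support := (Walk.cons_isPath_iff _ _).1 hqpath |>.2
          have hdisj : ∀ z, z ∈ p'.support → z ∈ q'.support → False := by
            intro z hz1 hz2
            have hw1 : (Walk.cons h (p'.takeUntil z hz1)).IsPath := by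
              rw [Walk.cons_isPath_iff]
              exact ⟨hp'path.takeUntil hz1,
                fun hcc => hcp' (Walk.support_takeUntil_subset _ hz1 hcc)⟩
            have hw2 : (Walk.cons h' (q'.takeUntil z hz2)).IsPath := by
              rw [Walk.cons_isPath_iff]
              exact ⟨hq'path.takeUntil hz2,
                fun hcc => hcq' (Walk.support_takeUntil_subset _ hz2 hcc)⟩
            obtain ⟨P, -, hPu⟩ := hT.existsUnique_path c z
            have heq : Walk.cons h (p'.takeUntil z hz1) = Walk.cons h' (q'.takeUntil z hz2) :=
              (hPu _ hw1).trans (hPu _ hw2).symm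
            have hgv := congrArg (fun w => Walk.getVert w 1) heq
            simp only [Walk.getVert_cons _ _ one_ne_zero, Nat.sub_self, Walk.getVert_zero] at hgv
            exact hxy hgv
          have hbig : ((Walk.cons h p').reverse.append (Walk.cons h' q')).IsPath := by
            rw [Walk.isPath_def, Walk.support_append, Walk.support_reverse]
            refine List.Nodup.append (List.nodup_reverse.2 hppath.support_nodup) ?_ ?_
            · rw [Walk.support_cons, List.tail_cons]
              exact hq'path.support_nodup
            · intro z hz1 hz2
              rw [List.mem_reverse, Walk.support_cons] at hz1
              rw [Walk.support_cons, List.tail_cons] at hz2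
              rcases List.mem_cons.1 hz1 with rfl | hz1'
              · exact hcq' hz2
              · exact hdisj z hz1' hz2
          obtain ⟨P0, hP0, hP0len⟩ := hT.isConnected.exists_path_of_dist a b
          obtain ⟨PP, -, hPu⟩ := hT.existsUnique_path a b
          have hEq : (Walk.cons h p').reverse.append (Walk.cons h' q') = P0 :=
            (hPu _ hbig).trans (hPu _ hP0).symm
          have hlen := congrArg Walk.length hEq
          rw [Walk.length_append, Walk.length_reverse, hP0len] at hlen
          rw [hp, hq] at hlen
          have cac : G.dist a c = G.dist c a := SimpleGraph.dist_comm
          omega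

private lemma aux_median [DecidableEq V] (hT : G.IsTree) (c a b : V) :
    ∃ m : V, G.dist a m + G.dist m b = G.dist a b ∧
      G.dist a m + G.dist m c = G.dist a c ∧ G.dist b m + G.dist m c = G.dist b c := by
  obtain ⟨p, -, hp⟩ := hT.isConnected.exists_path_of_dist c a
  obtain ⟨q, -, hq⟩ := hT.isConnected.exists_path_of_dist c b
  exact aux_median_aux hT (p.length + q.length) c a b p q hp hq le_rfl

private lemma aux_collinear [DecidableEq V] (hT : G.IsTree) {a b m1 m2 : V}
    (h1 : G.dist a m1 + G.dist m1 b = G.dist a b)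
    (h2 : G.dist a m2 + G.dist m2 b = G.dist a b) :
    G.dist a m1 + G.dist m1 m2 = G.dist a m2 ∨ G.dist a m2 + G.dist m2 m1 = G.dist a m1 := by
  obtain ⟨p1, -, hp1⟩ := hT.isConnected.exists_path_of_dist a m1
  obtain ⟨p2, -, hp2⟩ := hT.isConnected.exists_path_of_dist m1 b
  obtain ⟨q1, -, hq1⟩ := hT.isConnected.exists_path_of_dist a m2
  obtain ⟨q2, -, hq2⟩ := hT.isConnected.exists_path_of_dist m2 b
  have hPlen : (p1.append p2).length = G.dist a b := by
    rw [Walk.length_append, hp1, hp2, h1]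
  have hQlen : (q1.append q2).length = G.dist a b := by
    rw [Walk.length_append, hq1, hq2, h2]
  have hP : (p1.append p2).IsPath := Walk.isPath_of_length_eq_dist _ hPlen
  have hQ : (q1.append q2).IsPath := Walk.isPath_of_length_eq_dist _ hQlen
  obtain ⟨PP, -, hu⟩ := hT.existsUnique_path a b
  have hPQ : p1.append p2 = q1.append q2 := (hu _ hP).trans (hu _ hQ).symm
  have hm1P : m1 ∈ (p1.append p2).support :=
    (Walk.mem_support_append_iff _ _).2 (Or.inl (Walk.end_mem_support p1))
  have hm2P : m2 ∈ (p1.append p2).support := by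
    rw [hPQ]
    exact (Walk.mem_support_append_iff _ _).2 (Or.inl (Walk.end_mem_support q1))
  obtain ⟨e1, e2, e3⟩ := aux_geo_split' hT.isConnected (p1.append p2) hPlen hm1P
  rw [← Walk.take_spec (p1.append p2) hm1P, Walk.mem_support_append_iff] at hm2P
  rcases hm2P with hmem | hmem
  · right
    exact (aux_geo_split' hT.isConnected _ e2 hmem).1
  · left
    have h5 := (aux_geo_split' hT.isConnected _ e3 hmem).1
    omega

private lemma aux_dist_le_max [DecidableEq V] (hT : G.IsTree) {a b : V}
    (hmax : ∀ x y : V, G.dist x y ≤ G.dist a b) (v u : V) :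
    G.dist v u ≤ max (G.dist v a) (G.dist v b) := by
  obtain ⟨m1, e11, e12, e13⟩ := aux_median hT v a b
  obtain ⟨m2, e21, e22, e23⟩ := aux_median hT u a b
  have t1 : G.dist v u ≤ G.dist v m1 + G.dist m1 u := hT.isConnected.dist_triangle
  have t2 : G.dist m1 u ≤ G.dist m1 m2 + G.dist m2 u := hT.isConnected.dist_triangle
  have c1 : G.dist v b = G.dist b v := SimpleGraph.dist_comm
  have c2 : G.dist m1 v = G.dist v m1 := SimpleGraph.dist_comm
  have c3 : G.dist b m1 = G.dist m1 b := SimpleGraph.dist_comm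
  have c4 : G.dist v a = G.dist a v := SimpleGraph.dist_comm
  have c5 : G.dist a m1 = G.dist m1 a := SimpleGraph.dist_comm
  have c6 : G.dist m1 m2 = G.dist m2 m1 := SimpleGraph.dist_comm
  have c7 : G.dist a m2 = G.dist m2 a := SimpleGraph.dist_comm
  have c8 : G.dist b m2 = G.dist m2 b := SimpleGraph.dist_comm
  rcases aux_collinear hT e11 e21 with hc | hc
  · have key : G.dist m2 u ≤ G.dist m2 b := by
      by_contra hk
      push_neg at hk
      have hau := hmax a u
      omega
    have goal2 : G.dist v u ≤ G.dist v b := by omega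
    exact le_max_of_le_right goal2
  · have key : G.dist m2 u ≤ G.dist m2 a := by
      by_contra hk
      push_neg at hk
      have hbu := hmax b u
      have cba : G.dist b a = G.dist a b := SimpleGraph.dist_comm
      omega
    have goal2 : G.dist v u ≤ G.dist v a := by omega
    exact le_max_of_le_left goal2

end Aux

section Aux
variable {V : Type*} {G : SimpleGraph V}

private lemma aux_cut_of_adj (hT : G.IsTree) {w x y : V} (hx : G.Adj w x) (hy : G.Adj w y)
    (hxy : x ≠ y) : IsCutVertex G w := by
  classical
  intro hconn
  obtain ⟨wk⟩ := hconn.preconnected ⟨x, hx.ne'⟩ ⟨y, hy.ne'⟩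
  let wkG := wk.map (SimpleGraph.Embedding.induce {v | v ≠ w}).toHom
  have hwsup : w ∉ wkG.support := by
    intro hmem
    rw [Walk.support_map, List.mem_map] at hmem
    obtain ⟨z, hz, hzz⟩ := hmem
    exact z.2 hzz
  have hbp : wkG.bypass.IsPath := Walk.bypass_isPath _
  have hw2 : (Walk.cons hx.symm (Walk.cons hy Walk.nil) : G.Walk x y).IsPath := by
    simp [Walk.isPath_def, hx.ne', hy.ne, hxy]
  obtain ⟨P, -, hu⟩ := hT.existsUnique_path x y
  have heq : wkG.bypass = Walk.cons hx.symm (Walk.cons hy Walk.nil) :=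
    (hu _ hbp).trans (hu _ hw2).symm
  have hmem2 : w ∈ wkG.bypass.support := by rw [heq]; simp
  exact hwsup (Walk.support_bypass_subset _ hmem2)

private lemma aux_exists_dist_two [Fintype V] (hT : G.IsTree) (h3 : 3 ≤ Fintype.card V)
    {w : V} (hw : IsCutVertex G w) : ∃ x y : V, 2 ≤ G.dist x y := by
  classical
  have hne : Nonempty ({v | v ≠ w} : Set V) := by
    obtain ⟨x, hx⟩ := Fintype.exists_ne_of_one_lt_card (by omega) w
    exact ⟨⟨x, hx⟩⟩
  have hnpre : ¬ (G.induce {v | v ≠ w}).Preconnected := fun hp => hw ⟨hp⟩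
  rw [SimpleGraph.Preconnected] at hnpre
  push_neg at hnpre
  obtain ⟨x, y, hxy⟩ := hnpre
  refine ⟨x.1, y.1, ?_⟩
  have hne' : x.1 ≠ y.1 := by
    intro h
    exact hxy (by rw [Subtype.ext h])
  have hnadj : ¬ G.Adj x.1 y.1 := by
    intro ha
    have : (G.induce {v | v ≠ w}).Adj x y := ha
    exact hxy this.reachable
  have h0 : G.dist x.1 y.1 ≠ 0 := by
    rw [SimpleGraph.dist_ne_zero_iff_ne_and_reachable]
    exact ⟨hne', hT.isConnected x.1 y.1⟩
  have h1 : G.dist x.1 y.1 ≠ 1 := fun h => hnadj (SimpleGraph.dist_eq_one_iff_adj.1 h)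
  omega

end Aux

section Aux
variable {V : Type*} {G : SimpleGraph V}

private lemma aux_ecc_le [Fintype V] [Nonempty V] (G : SimpleGraph V) (v : V) (k : ℕ)
    (h : ∀ u, G.dist v u ≤ k) : ecc G v ≤ k := ciSup_le h

private lemma aux_le_ecc [Fintype V] (G : SimpleGraph V) (v u : V) : G.dist v u ≤ ecc G v :=
  le_ciSup (Set.Finite.bddAbove (Set.finite_range _)) u

end Aux

private def auxH (t : ℕ) : ℕ := ∑ i ∈ Finset.range t, max (i + 1) (t - i)

private lemma auxH_step (t : ℕ) : auxH t + (t + 1) ≤ auxH (t + 1) := by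
  unfold auxH
  rw [Finset.sum_range_succ]
  have hlast : max (t + 1) (t + 1 - t) = t + 1 := by
    rw [Nat.max_eq_left (by omega)]
  have hmono : ∑ i ∈ Finset.range t, max (i + 1) (t - i)
      ≤ ∑ i ∈ Finset.range t, max (i + 1) (t + 1 - i) :=
    Finset.sum_le_sum (fun i _ => max_le_max le_rfl (by omega))
  omega

private lemma auxH_ge (D k : ℕ) : auxH (D - 1) + k * D ≤ auxH (D - 1 + k) := by
  induction k with
  | zero => simp
  | succ k ih =>
    have hstep := auxH_step (D - 1 + k)
    have h2 : D - 1 + k + 1 = D - 1 + (k + 1) := by omega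
    have : auxH (D - 1) + (k + 1) * D = auxH (D - 1) + k * D + D := by ring
    rw [this, ← h2]
    have hD : D ≤ D - 1 + k + 1 := by omega
    omega

private lemma auxH_main {D s : ℕ} (hD2 : 2 ≤ D) (hDs : D ≤ s + 1) :
    auxH (D - 1) + (s + 1 - D) * D ≤ auxH s := by
  have := auxH_ge D (s + 1 - D)
  have hrw : D - 1 + (s + 1 - D) = s := by omega
  rwa [hrw] at this

section TlmdSide

private lemma tlmd_adj_path {l m s : ℕ} {i j : Fin s} (h : (i : ℕ) + 1 = (j : ℕ)) :
    (Tlmd l m s).Adj (Sum.inl i) (Sum.inl j) := by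
  rw [Tlmd, SimpleGraph.fromRel_adj]
  refine ⟨?_, Or.inl h⟩
  simp only [ne_eq, Sum.inl.injEq]
  intro hh
  rw [Fin.ext_iff] at hh
  omega

private lemma tlmd_adj_left {l m s : ℕ} {i : Fin s} (h : (i : ℕ) = 0) (a : Fin l) :
    (Tlmd l m s).Adj (Sum.inl i) (Sum.inr (Sum.inl a)) := by
  rw [Tlmd, SimpleGraph.fromRel_adj]
  exact ⟨by simp, Or.inl h⟩

private lemma tlmd_adj_right {l m s : ℕ} {i : Fin s} (h : (i : ℕ) + 1 = s) (b : Fin m) :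
    (Tlmd l m s).Adj (Sum.inl i) (Sum.inr (Sum.inr b)) := by
  rw [Tlmd, SimpleGraph.fromRel_adj]
  exact ⟨by simp, Or.inl h⟩

private lemma tlmd_reach_zero {l m s : ℕ} (hs : 0 < s) :
    ∀ (k : ℕ) (hk : k < s), (Tlmd l m s).Reachable (Sum.inl ⟨k, hk⟩) (Sum.inl ⟨0, hs⟩) := by
  intro k
  induction k with
  | zero => intro hk; exact Reachable.refl _
  | succ k ih =>
    intro hk
    have hadj := tlmd_adj_path (l := l) (m := m) (i := (⟨k, by omega⟩ : Fin s))
      (j := (⟨k + 1, hk⟩ : Fin s)) rfl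
    exact (hadj.symm.reachable).trans (ih (by omega))

private lemma tlmd_reach {l m s : ℕ} (hs : 0 < s) (x y : Fin s ⊕ (Fin l ⊕ Fin m)) :
    (Tlmd l m s).Reachable x y := by
  have base : ∀ z : Fin s ⊕ (Fin l ⊕ Fin m),
      (Tlmd l m s).Reachable z (Sum.inl ⟨0, hs⟩) := by
    rintro (i | a | b)
    · have := tlmd_reach_zero (l := l) (m := m) hs i.1 i.2
      simpa using this
    · exact ((tlmd_adj_left (i := (⟨0, hs⟩ : Fin s)) rfl a).symm.reachable)
    · refine ((tlmd_adj_right (i := (⟨s - 1, by omega⟩ : Fin s))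
          (by show s - 1 + 1 = s; omega) b).symm.reachable).trans
        (tlmd_reach_zero hs (s - 1) (by omega))
  exact (base x).trans (base y).symm

private lemma tlmd_lower (l m s : ℕ) (hl : 1 ≤ l) (hm : 1 ≤ m) (hs : 1 ≤ s) :
    (l + m) * (s + 1) + auxH s ≤ totalEcc (Tlmd l m s) := by
  classical
  set T := Tlmd l m s with hT
  set f : (Fin s ⊕ (Fin l ⊕ Fin m)) → ℤ :=
    Sum.elim (fun i => (i.val : ℤ) + 1) (Sum.elim (fun _ => (0 : ℤ)) (fun _ => (s : ℤ) + 1))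
    with hfdef
  have hlip : ∀ x y, T.Adj x y → |f x - f y| ≤ 1 := by
    intro x y hxy
    rw [hT, Tlmd, SimpleGraph.fromRel_adj] at hxy
    obtain ⟨-, hrel⟩ := hxy
    rcases x with i | a | b <;> rcases y with j | c | d <;>
      simp only [hfdef, Sum.elim_inl, Sum.elim_inr] <;>
      rcases hrel with h | h <;>
      first
        | exact h.elim
        | (rw [abs_le]; constructor <;> omega)
  have hreach : ∀ x y, T.Reachable x y := tlmd_reach (by omega)
  have hdistge : ∀ x y, |f x - f y| ≤ (T.dist x y : ℤ) :=
    fun x y => aux_dist_lip f hlip (hreach x y)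
  have hecc_path : ∀ i : Fin s, max ((i : ℕ) + 1) (s - (i : ℕ)) ≤ ecc T (Sum.inl i) := by
    intro i
    have d1 : (i : ℕ) + 1 ≤ T.dist (Sum.inl i) (Sum.inr (Sum.inl ⟨0, hl⟩) : Fin s ⊕ (Fin l ⊕ Fin m)) := by
      have h := abs_le.1 (hdistge (Sum.inl i) (Sum.inr (Sum.inl ⟨0, hl⟩) : Fin s ⊕ (Fin l ⊕ Fin m)))
      simp only [hfdef, Sum.elim_inl, Sum.elim_inr] at h
      omega
    have d2 : s - (i : ℕ) ≤ T.dist (Sum.inl i) (Sum.inr (Sum.inr ⟨0, hm⟩) : Fin s ⊕ (Fin l ⊕ Fin m)) := by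
      have h := abs_le.1 (hdistge (Sum.inl i) (Sum.inr (Sum.inr ⟨0, hm⟩) : Fin s ⊕ (Fin l ⊕ Fin m)))
      simp only [hfdef, Sum.elim_inl, Sum.elim_inr] at h
      omega
    have e1 := aux_le_ecc T (Sum.inl i) (Sum.inr (Sum.inl ⟨0, hl⟩) : Fin s ⊕ (Fin l ⊕ Fin m))
    have e2 := aux_le_ecc T (Sum.inl i) (Sum.inr (Sum.inr ⟨0, hm⟩) : Fin s ⊕ (Fin l ⊕ Fin m))
    exact max_le (by omega) (by omega)
  have hecc_l : ∀ a : Fin l, s + 1 ≤ ecc T (Sum.inr (Sum.inl a)) := by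
    intro a
    have h := abs_le.1 (hdistge (Sum.inr (Sum.inl a)) (Sum.inr (Sum.inr ⟨0, hm⟩) : Fin s ⊕ (Fin l ⊕ Fin m)))
    simp only [hfdef, Sum.elim_inl, Sum.elim_inr] at h
    have e := aux_le_ecc T (Sum.inr (Sum.inl a)) (Sum.inr (Sum.inr ⟨0, hm⟩) : Fin s ⊕ (Fin l ⊕ Fin m))
    omega
  have hecc_m : ∀ b : Fin m, s + 1 ≤ ecc T (Sum.inr (Sum.inr b)) := by
    intro b
    have h := abs_le.1 (hdistge (Sum.inr (Sum.inr b)) (Sum.inr (Sum.inl ⟨0, hl⟩) : Fin s ⊕ (Fin l ⊕ Fin m)))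
    simp only [hfdef, Sum.elim_inl, Sum.elim_inr] at h
    have e := aux_le_ecc T (Sum.inr (Sum.inr b)) (Sum.inr (Sum.inl ⟨0, hl⟩) : Fin s ⊕ (Fin l ⊕ Fin m))
    omega
  rw [totalEcc, Fintype.sum_sum_type, Fintype.sum_sum_type]
  have S1 : auxH s ≤ ∑ i : Fin s, ecc T (Sum.inl i) := by
    rw [auxH, ← Fin.sum_univ_eq_sum_range (fun i => max (i + 1) (s - i)) s]
    exact Finset.sum_le_sum (fun i _ => hecc_path i)
  have S2 : l * (s + 1) ≤ ∑ a : Fin l, ecc T (Sum.inr (Sum.inl a)) := by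
    calc l * (s + 1) = ∑ _a : Fin l, (s + 1) := by
          rw [Finset.sum_const, Finset.card_univ, Fintype.card_fin, smul_eq_mul]
      _ ≤ _ := Finset.sum_le_sum (fun a _ => hecc_l a)
  have S3 : m * (s + 1) ≤ ∑ b : Fin m, ecc T (Sum.inr (Sum.inr b)) := by
    calc m * (s + 1) = ∑ _b : Fin m, (s + 1) := by
          rw [Finset.sum_const, Finset.card_univ, Fintype.card_fin, smul_eq_mul]
      _ ≤ _ := Finset.sum_le_sum (fun b _ => hecc_m b)
  have : (l + m) * (s + 1) = l * (s + 1) + m * (s + 1) := by ring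
  omega

end TlmdSide

section MainAux
open SimpleGraph Walk
variable {V : Type*} {G : SimpleGraph V}

private lemma aux_internal [Fintype V] [DecidableEq V] (hT : G.IsTree) {v u : V}
    (q : G.Walk v u) (hq : q.length = G.dist v u) (Cut : Finset V)
    (hCut : ∀ z, IsCutVertex G z → z ∈ Cut) :
    ((Finset.range (q.length - 1)).image (fun j => q.getVert (j + 1))).card = q.length - 1 ∧
    ((Finset.range (q.length - 1)).image (fun j => q.getVert (j + 1))) ⊆ Cut := by
  constructor
  · rw [Finset.card_image_of_injOn, Finset.card_range]
    intro i hi j hj hij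
    simp only [Finset.coe_range, Set.mem_Iio] at hi hj
    have h1 := (aux_geo_getVert hT.isConnected q hq (i := i + 1) (by omega)).1
    have h2 := (aux_geo_getVert hT.isConnected q hq (i := j + 1) (by omega)).1
    have hij' : q.getVert (i + 1) = q.getVert (j + 1) := hij
    rw [hij'] at h1
    omega
  · intro z hz
    simp only [Finset.mem_image, Finset.mem_range] at hz
    obtain ⟨j, hj, rfl⟩ := hz
    apply hCut
    have a1 : G.Adj (q.getVert j) (q.getVert (j + 1)) := q.adj_getVert_succ (by omega)
    have a2 : G.Adj (q.getVert (j + 1)) (q.getVert (j + 2)) := q.adj_getVert_succ (by omega)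
    have hne : q.getVert j ≠ q.getVert (j + 2) := by
      have h1 := (aux_geo_getVert hT.isConnected q hq (i := j) (by omega)).1
      have h2 := (aux_geo_getVert hT.isConnected q hq (i := j + 2) (by omega)).1
      intro h
      rw [h] at h1
      omega
    exact aux_cut_of_adj hT a1.symm a2 hne

private lemma aux_dist_le_cut [Fintype V] [DecidableEq V] (hT : G.IsTree) (Cut : Finset V)
    (hCut : ∀ z, IsCutVertex G z → z ∈ Cut) (v u : V) :
    G.dist v u ≤ Cut.card + 1 := by
  obtain ⟨q, -, hq⟩ := hT.isConnected.exists_path_of_dist v u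
  obtain ⟨h1, h2⟩ := aux_internal hT q hq Cut hCut
  have h3 := Finset.card_le_card h2
  rw [h1] at h3
  omega

end MainAux

-- STATEMENT 11
theorem stmt11 {V : Type*} [Fintype V] (G : SimpleGraph V) (hT : G.IsTree)
    (n s : ℕ) (hcard : Fintype.card V = n) (hs1 : 1 ≤ s) (hs2 : s ≤ n - 2)
    (hcut : {w | IsCutVertex G w}.ncard = s) :
    ∀ l, 1 ≤ l → l ≤ n - s - 1 → totalEcc G ≤ totalEcc (Tlmd l (n - l - s) s) := by
  classical
  intro l hl1 hl2
  have hn3 : 3 ≤ n := by omega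
  haveI hNE : Nonempty V := by
    rw [← Fintype.card_pos_iff, hcard]; omega
  set Cut : Finset V := Set.toFinset {w | IsCutVertex G w} with hCutdef
  have hCutcard : Cut.card = s := by
    rw [hCutdef, ← Set.ncard_eq_toFinset_card', hcut]
  have hCutmem : ∀ z, IsCutVertex G z → z ∈ Cut := fun z hz => Set.mem_toFinset.2 hz
  -- a diametral pair
  obtain ⟨ab, -, hmax'⟩ := Finset.exists_max_image (Finset.univ : Finset (V × V))
    (fun p => G.dist p.1 p.2) ⟨(Classical.arbitrary V, Classical.arbitrary V), Finset.mem_univ _⟩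
  obtain ⟨a, b⟩ := ab
  have hmax : ∀ x y : V, G.dist x y ≤ G.dist a b := fun x y => hmax' (x, y) (Finset.mem_univ _)
  set D := G.dist a b with hD
  -- D ≥ 2
  have hCutne : ∃ w, IsCutVertex G w := by
    have hne : Cut.Nonempty := by rw [← Finset.card_pos, hCutcard]; omega
    obtain ⟨w, hw⟩ := hne
    exact ⟨w, Set.mem_toFinset.1 hw⟩
  obtain ⟨w0, hw0⟩ := hCutne
  obtain ⟨x2, y2, hxy2⟩ := aux_exists_dist_two hT (by omega) hw0
  have hD2 : 2 ≤ D := le_trans hxy2 (hmax _ _)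
  -- a geodesic from a to b
  obtain ⟨p, -, hp⟩ := hT.isConnected.exists_path_of_dist a b
  obtain ⟨hIntcard, hIntsub⟩ := aux_internal hT p hp Cut hCutmem
  rw [hp] at hIntcard hIntsub
  set Int : Finset V := (Finset.range (D - 1)).image (fun j => p.getVert (j + 1)) with hIntdef
  have hDles : D ≤ s + 1 := by
    have := Finset.card_le_card hIntsub
    rw [hIntcard, hCutcard] at this
    omega
  -- eccentricity bounds
  have heccle : ∀ v : V, ecc G v ≤ s + 1 := by
    intro v
    refine aux_ecc_le G v (s + 1) (fun u => ?_)
    have := aux_dist_le_cut hT Cut hCutmem v u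
    omega
  have heccmax : ∀ v : V, ecc G v ≤ max (G.dist v a) (G.dist v b) :=
    fun v => aux_ecc_le G v _ (fun u => aux_dist_le_max hT hmax v u)
  have heccD : ∀ v : V, ecc G v ≤ D :=
    fun v => (heccmax v).trans (max_le (hmax v a) (hmax v b))
  -- sums over the graph
  have hsum1 : ∑ v ∈ Finset.univ \ Cut, ecc G v ≤ (n - s) * (s + 1) := by
    calc ∑ v ∈ Finset.univ \ Cut, ecc G v ≤ ∑ _v ∈ Finset.univ \ Cut, (s + 1) :=
          Finset.sum_le_sum (fun v _ => heccle v)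
      _ = (Finset.univ \ Cut).card * (s + 1) := by rw [Finset.sum_const, smul_eq_mul]
      _ = (n - s) * (s + 1) := by
          rw [Finset.card_sdiff_of_subset (Finset.subset_univ _), Finset.card_univ, hcard, hCutcard]
  have hsum2 : ∑ v ∈ Int, ecc G v ≤ auxH (D - 1) := by
    rw [hIntdef, Finset.sum_image (Finset.injOn_of_card_image_eq
      (by rw [← hIntdef, hIntcard, Finset.card_range]))]
    rw [auxH]
    apply Finset.sum_le_sum
    intro j hj
    rw [Finset.mem_range] at hj
    have hgv := aux_geo_getVert hT.isConnected p hp (i := j + 1) (by omega)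
    have h1 : G.dist (p.getVert (j + 1)) a = j + 1 := by
      rw [SimpleGraph.dist_comm]; exact hgv.1
    have h2 : G.dist (p.getVert (j + 1)) b = D - 1 - j := by
      have := hgv.2
      rw [hp] at this
      omega
    calc ecc G (p.getVert (j + 1)) ≤ max (G.dist (p.getVert (j + 1)) a)
          (G.dist (p.getVert (j + 1)) b) := heccmax _
      _ = max (j + 1) (D - 1 - j) := by rw [h1, h2]
  have hsum3 : ∑ v ∈ Cut \ Int, ecc G v ≤ (s + 1 - D) * D := by
    calc ∑ v ∈ Cut \ Int, ecc G v ≤ ∑ _v ∈ Cut \ Int, D :=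
          Finset.sum_le_sum (fun v _ => heccD v)
      _ = (Cut \ Int).card * D := by rw [Finset.sum_const, smul_eq_mul]
      _ = (s + 1 - D) * D := by
          rw [Finset.card_sdiff_of_subset hIntsub, hIntcard, hCutcard]
          congr 1
          omega
  have hG : totalEcc G ≤ (n - s) * (s + 1) + (auxH (D - 1) + (s + 1 - D) * D) := by
    rw [totalEcc]
    have e1 : ∑ v, ecc G v
        = ∑ v ∈ Finset.univ \ Cut, ecc G v + ∑ v ∈ Cut, ecc G v :=
      (Finset.sum_sdiff (Finset.subset_univ Cut)).symm
    have e2 : ∑ v ∈ Cut, ecc G v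
        = ∑ v ∈ Cut \ Int, ecc G v + ∑ v ∈ Int, ecc G v :=
      (Finset.sum_sdiff hIntsub).symm
    omega
  have harith := auxH_main hD2 hDles
  have hTl := tlmd_lower l (n - l - s) s hl1 (by omega) hs1
  have hlm : l + (n - l - s) = n - s := by omega
  rw [hlm] at hTl
  omega
end

section
/- Let 0 ≤ s ≤ n−2 and let l_1,…,l_{n−s} be positive integers with l_1+⋯+l_{n−s} = n. Let l'_1,…,l'_{n−s} be positive integers with l'_1+⋯+l'_{n−s} = n and |l'_i − l'_j| ≤ 1 for all i, j ∈ {1,…,n−s}. Then ε(K_{n−s}^n(l'_1,…,l'_{n−s})) ≤ ε(K_{n−s}^n(l_1,…,l_{n−s})). -/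
open SimpleGraph

namespace S13
open Finset

/-- sum over a path of eccentricities -/
def ff (c M : ℕ) : ℕ := ∑ d ∈ Finset.range c, max (c - 1 - d) (d + M)

lemma ff_mono (c : ℕ) {M M' : ℕ} (h : M ≤ M') : ff c M ≤ ff c M' :=
  Finset.sum_le_sum fun d _ => max_le_max le_rfl (by omega)

lemma ff_lin {c X : ℕ} (h : c ≤ X + 1) : ff c X = ∑ d ∈ Finset.range c, (d + X) :=
  Finset.sum_congr rfl fun d hd => by
    rw [Finset.mem_range] at hd
    exact max_eq_right (by omega)

lemma ff_succ_c {c X : ℕ} (h : c ≤ X) : ff (c + 1) X = ff c X + (c + X) := by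
  rw [ff_lin (by omega), ff_lin (by omega), Finset.sum_range_succ]

lemma ff_succ_M {c X : ℕ} (h : c ≤ X + 1) : ff c (X + 1) = ff c X + c := by
  rw [ff_lin (by omega), ff_lin h]
  induction c with
  | zero => simp
  | succ k ih =>
      rw [Finset.sum_range_succ, Finset.sum_range_succ, ih (by omega)]
      omega

lemma ff_shift (c M : ℕ) : ff (c + 1) M = max c M + ff c (M + 1) := by
  unfold ff
  rw [Finset.sum_range_succ']
  have h1 : ∀ d, max (c + 1 - 1 - (d + 1)) (d + 1 + M) = max (c - 1 - d) (d + (M + 1)) := by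
    intro d; congr 1 <;> omega
  have h0 : max (c + 1 - 1 - 0) (0 + M) = max c M := by congr 1 <;> omega
  rw [h0]
  rw [Finset.sum_congr rfl fun d _ => h1 d]
  omega

end S13

namespace S13
open Finset

variable {m : ℕ}

/-- max of l over indices ≠ i -/
def MM (l : Fin m → ℕ) (i : Fin m) : ℕ := (Finset.univ.erase i).sup l

def FF (l : Fin m → ℕ) : ℕ := ∑ i, ff (l i) (MM l i)

lemma sum_split (i0 j0 : Fin m) (hne : i0 ≠ j0) (g : Fin m → ℕ) :
    ∑ i, g i = g i0 + g j0 + ∑ i ∈ (Finset.univ.erase i0).erase j0, g i := by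
  rw [← Finset.add_sum_erase _ g (Finset.mem_univ i0),
    ← Finset.add_sum_erase _ g (Finset.mem_erase.mpr ⟨hne.symm, Finset.mem_univ j0⟩), add_assoc]

lemma smooth (l lt : Fin m → ℕ) (i0 j0 : Fin m)
    (hmax : ∀ j, l j ≤ l i0) (hgap : l j0 + 2 ≤ l i0)
    (hlt0 : lt i0 = l i0 - 1) (hlt1 : lt j0 = l j0 + 1)
    (hlt2 : ∀ i, i ≠ i0 → i ≠ j0 → lt i = l i) :
    FF lt ≤ FF l := by
  have hne : i0 ≠ j0 := fun h => by rw [h] at hgap; omega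
  set s : Finset (Fin m) := (Finset.univ.erase i0).erase j0 with hs
  have hmem_s : ∀ i ∈ s, i ≠ i0 ∧ i ≠ j0 := by
    intro i hi
    rw [hs, Finset.mem_erase, Finset.mem_erase] at hi
    exact ⟨hi.2.1, hi.1⟩
  have hlt_s : ∀ i ∈ s, lt i = l i := by
    intro i hi
    obtain ⟨h1, h2⟩ := hmem_s i hi
    exact hlt2 i h1 h2
  have hKL : s.sup l ≤ l i0 := Finset.sup_le fun i _ => hmax i
  -- MM computations
  have herase_i0 : Finset.univ.erase i0 = insert j0 s := by
    rw [hs, Finset.insert_erase (Finset.mem_erase.mpr ⟨hne.symm, Finset.mem_univ j0⟩)]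
  have herase_j0 : Finset.univ.erase j0 = insert i0 ((Finset.univ.erase j0).erase i0) := by
    rw [Finset.insert_erase (Finset.mem_erase.mpr ⟨hne, Finset.mem_univ i0⟩)]
  have hcomm : (Finset.univ.erase j0).erase i0 = s := by
    rw [hs, Finset.erase_right_comm]
  have hMi0 : MM l i0 = max (l j0) (s.sup l) := by
    rw [MM, herase_i0, Finset.sup_insert]
  have hMj0 : MM l j0 = l i0 := by
    apply le_antisymm
    · exact Finset.sup_le fun i _ => hmax i
    · exact Finset.le_sup (Finset.mem_erase.mpr ⟨hne, Finset.mem_univ i0⟩)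
  have hsupt : s.sup lt = s.sup l := Finset.sup_congr rfl hlt_s
  have hMti0 : MM lt i0 = max (l j0 + 1) (s.sup l) := by
    rw [MM, herase_i0, Finset.sup_insert, hsupt, hlt1]
  have hMtj0 : MM lt j0 = max (l i0 - 1) (s.sup l) := by
    rw [MM, herase_j0, Finset.sup_insert, hcomm, hsupt, hlt0]
  have hMt_le : ∀ i ∈ s, MM lt i ≤ MM l i := by
    intro i hi
    obtain ⟨h1, h2⟩ := hmem_s i hi
    have hLle : l i0 ≤ MM l i :=
      Finset.le_sup (f := l) (Finset.mem_erase.mpr ⟨Ne.symm h1, Finset.mem_univ i0⟩)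
    apply Finset.sup_le
    intro j hj
    rw [Finset.mem_erase] at hj
    by_cases hji0 : j = i0
    · subst hji0; rw [hlt0]; omega
    · by_cases hjj0 : j = j0
      · subst hjj0; rw [hlt1]; omega
      · rw [hlt2 j hji0 hjj0]
        exact Finset.le_sup (Finset.mem_erase.mpr ⟨hj.1, Finset.mem_univ j⟩)
  -- sums split
  have E1 : FF lt = ff (lt i0) (MM lt i0) + ff (lt j0) (MM lt j0)
      + ∑ i ∈ s, ff (lt i) (MM lt i) := sum_split i0 j0 hne _
  have E2 : FF l = ff (l i0) (MM l i0) + ff (l j0) (MM l j0)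
      + ∑ i ∈ s, ff (l i) (MM l i) := sum_split i0 j0 hne _
  have hrest : ∑ i ∈ s, ff (lt i) (MM lt i) ≤ ∑ i ∈ s, ff (l i) (MM l i) := by
    apply Finset.sum_le_sum
    intro i hi
    rw [hlt_s i hi]
    exact ff_mono _ (hMt_le i hi)
  have hL1 : l i0 - 1 + 1 = l i0 := by omega
  -- head inequality
  have hhead : ff (l i0 - 1) (max (l j0 + 1) (s.sup l)) + ff (l j0 + 1) (max (l i0 - 1) (s.sup l)) ≤
      ff (l i0) (max (l j0) (s.sup l)) + ff (l j0) (l i0) := by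
    rcases le_or_gt (s.sup l) (l i0 - 1) with hKc | hKc
    · -- s.sup l ≤ l i0 - 1
      have hA : max (l j0) (s.sup l) ≤ l i0 - 1 := max_le (by omega) hKc
      have e1 : ff (l i0) (max (l j0) (s.sup l)) =
          max (l i0 - 1) (max (l j0) (s.sup l)) + ff (l i0 - 1) (max (l j0) (s.sup l) + 1) := by
        conv_lhs => rw [← hL1]
        exact ff_shift _ _
      have e1' : max (l i0 - 1) (max (l j0) (s.sup l)) = l i0 - 1 := max_eq_left hA
      have e2 : ff (l i0 - 1) (max (l j0 + 1) (s.sup l)) ≤ ff (l i0 - 1) (max (l j0) (s.sup l) + 1) :=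
        ff_mono _ (max_le (by omega) (le_trans (le_max_right (l j0) (s.sup l)) (by omega)))
      have e3 : max (l i0 - 1) (s.sup l) = l i0 - 1 := max_eq_left hKc
      have e4 : ff (l j0 + 1) (l i0 - 1) = ff (l j0) (l i0 - 1) + (l j0 + (l i0 - 1)) :=
        ff_succ_c (by omega)
      have e5 : ff (l j0) (l i0) = ff (l j0) (l i0 - 1) + l j0 := by
        conv_lhs => rw [← hL1]
        exact ff_succ_M (by omega)
      rw [e1, e1', e3, e4, e5]
      omega
    · -- s.sup l = l i0
      have hKL' : s.sup l = l i0 := by omega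
      have e0 : max (l j0) (s.sup l) = l i0 := by rw [hKL']; exact max_eq_right (by omega)
      have e1 : max (l j0 + 1) (s.sup l) = l i0 := by rw [hKL']; exact max_eq_right (by omega)
      have e2 : max (l i0 - 1) (s.sup l) = l i0 := by rw [hKL']; exact max_eq_right (by omega)
      have e3 : ff (l i0) (l i0) = ff (l i0 - 1) (l i0) + (l i0 - 1 + l i0) := by
        have := ff_succ_c (c := l i0 - 1) (X := l i0) (by omega)
        rw [hL1] at this
        exact this
      have e4 : ff (l j0 + 1) (l i0) = ff (l j0) (l i0) + (l j0 + l i0) := ff_succ_c (by omega)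
      rw [e0, e1, e2, e3, e4]
      omega
  rw [E1, E2, hlt0, hlt1, hMti0, hMtj0, hMi0, hMj0]
  omega

end S13

namespace S13
open Finset

def BB (m n : ℕ) : ℕ :=
  if n % m = 0 then m * ff (n / m) (n / m)
  else if n % m = 1 then (m - 1) * ff (n / m) (n / m + 1) + ff (n / m + 1) (n / m)
  else (m - n % m) * ff (n / m) (n / m + 1) + (n % m) * ff (n / m + 1) (n / m + 1)

variable {m : ℕ}

lemma MM_const_q (hm : 2 ≤ m) (l : Fin m → ℕ) (q : ℕ) (i : Fin m)
    (hub : ∀ j, j ≠ i → l j = q) : MM l i = q := by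
  obtain ⟨j, hj⟩ := Fintype.exists_ne_of_one_lt_card (by simp [Fintype.card_fin]; omega) i
  apply le_antisymm
  · exact Finset.sup_le fun k hk => le_of_eq (hub k (Finset.mem_erase.mp hk).1)
  · calc q = l j := (hub j hj).symm
      _ ≤ _ := Finset.le_sup (Finset.mem_erase.mpr ⟨hj, Finset.mem_univ j⟩)

lemma FF_of (hm : 2 ≤ m) (l : Fin m → ℕ) (q r : ℕ) (hr : r < m)
    (hval : ∀ i, l i = q ∨ l i = q + 1)
    (hcard : (Finset.univ.filter (fun i => l i = q + 1)).card = r) :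
    FF l = (if r = 0 then m * ff q q
      else if r = 1 then (m - 1) * ff q (q + 1) + ff (q + 1) q
      else (m - r) * ff q (q + 1) + r * ff (q + 1) (q + 1)) := by
  set T := Finset.univ.filter (fun i => l i = q + 1) with hT
  have hmemT : ∀ i, i ∈ T ↔ l i = q + 1 := by
    intro i; rw [hT, Finset.mem_filter]; simp
  rcases Nat.eq_zero_or_pos r with hr0 | hrpos
  · -- r = 0 : all equal q
    subst hr0
    have hall : ∀ i, l i = q := by
      intro i
      rcases hval i with h | h
      · exact h
      · exact absurd (Finset.card_eq_zero.mp hcard ▸ (hmemT i).mpr h) (Finset.notMem_empty i)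
    have hM : ∀ i, MM l i = q := fun i => MM_const_q hm l q i (fun j _ => hall j)
    simp only [if_pos rfl]
    rw [FF]
    rw [Finset.sum_congr rfl (fun i _ => by rw [hall i, hM i])]
    simp [Finset.card_univ, mul_comm]
  · rcases eq_or_lt_of_le (Nat.succ_le_of_lt hrpos) with hr1 | hr2
    · -- r = 1 : unique index with value q+1
      have hr1' : r = 1 := hr1.symm
      subst hr1'
      obtain ⟨i0, hi0⟩ := Finset.card_eq_one.mp hcard
      have hli0 : l i0 = q + 1 := (hmemT i0).mp (hi0 ▸ Finset.mem_singleton_self i0)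
      have hother : ∀ j, j ≠ i0 → l j = q := by
        intro j hj
        rcases hval j with h | h
        · exact h
        · exact absurd (Finset.mem_singleton.mp (hi0 ▸ (hmemT j).mpr h)) hj
      have hMi0 : MM l i0 = q := MM_const_q hm l q i0 hother
      have hMother : ∀ j, j ≠ i0 → MM l j = q + 1 := by
        intro j hj
        apply le_antisymm
        · exact Finset.sup_le fun k _ => by rcases hval k with h | h <;> omega
        · calc q + 1 = l i0 := hli0.symm
            _ ≤ _ := Finset.le_sup (Finset.mem_erase.mpr ⟨Ne.symm hj, Finset.mem_univ i0⟩)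
      norm_num
      rw [FF, ← Finset.add_sum_erase _ _ (Finset.mem_univ i0), hli0, hMi0]
      rw [Finset.sum_congr rfl (fun j hj => by
        rw [hother j (Finset.mem_erase.mp hj).1, hMother j (Finset.mem_erase.mp hj).1])]
      rw [Finset.sum_const, Finset.card_erase_of_mem (Finset.mem_univ i0)]
      simp [Finset.card_univ, mul_comm]
      omega
    · -- r ≥ 2
      have hM : ∀ i, MM l i = q + 1 := by
        intro i
        obtain ⟨a, ha, b, hb, hab⟩ := Finset.one_lt_card.mp (hcard ▸ hr2)
        have : ∃ c, c ≠ i ∧ l c = q + 1 := by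
          rcases eq_or_ne a i with h | h
          · exact ⟨b, by rw [← h]; exact hab.symm, (hmemT b).mp hb⟩
          · exact ⟨a, h, (hmemT a).mp ha⟩
        obtain ⟨c, hc, hlc⟩ := this
        apply le_antisymm
        · exact Finset.sup_le fun k _ => by rcases hval k with h | h <;> omega
        · calc q + 1 = l c := hlc.symm
            _ ≤ _ := Finset.le_sup (Finset.mem_erase.mpr ⟨hc, Finset.mem_univ c⟩)
      have hsplit : FF l = ∑ i ∈ T, ff (l i) (q + 1)
          + ∑ i ∈ Finset.univ.filter (fun i => ¬ l i = q + 1), ff (l i) (q + 1) := by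
        rw [FF, Finset.sum_congr rfl (fun i (_ : i ∈ Finset.univ) => by rw [hM i])]
        exact (Finset.sum_filter_add_sum_filter_not _ _ _).symm
      have hs1 : ∑ i ∈ T, ff (l i) (q + 1) = r * ff (q + 1) (q + 1) := by
        have : ∀ i ∈ T, ff (l i) (q + 1) = ff (q + 1) (q + 1) :=
          fun i hi => by rw [(hmemT i).mp hi]
        rw [Finset.sum_congr rfl this, Finset.sum_const, hcard, smul_eq_mul]
      have hcard2 : (Finset.univ.filter (fun i => ¬ l i = q + 1)).card = m - r := by
        have h2 := Finset.card_filter_add_card_filter_not (s := Finset.univ)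
          (p := fun i => l i = q + 1)
        rw [hcard, Finset.card_univ, Fintype.card_fin] at h2
        omega
      have hs2 : ∑ i ∈ Finset.univ.filter (fun i => ¬ l i = q + 1), ff (l i) (q + 1)
          = (m - r) * ff q (q + 1) := by
        have : ∀ i ∈ Finset.univ.filter (fun i => ¬ l i = q + 1),
            ff (l i) (q + 1) = ff q (q + 1) := by
          intro i hi
          rw [Finset.mem_filter] at hi
          rcases hval i with h | h
          · rw [h]
          · exact absurd h hi.2
        rw [Finset.sum_congr rfl this, Finset.sum_const, hcard2, smul_eq_mul]
      rw [hsplit, hs1, hs2, if_neg (by omega), if_neg (by omega)]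
      omega

end S13

namespace S13
open Finset

variable {m : ℕ}

lemma balanced_eq (hm : 2 ≤ m) {n : ℕ} (l : Fin m → ℕ) (hsum : ∑ i, l i = n)
    (hbal : ∀ i j, l i ≤ l j + 1) : FF l = BB m n := by
  have hm0 : 0 < m := by omega
  haveI : Nonempty (Fin m) := ⟨⟨0, by omega⟩⟩
  have hne : (Finset.univ : Finset (Fin m)).Nonempty := Finset.univ_nonempty
  obtain ⟨imin, -, hmin⟩ := Finset.exists_min_image Finset.univ l hne
  have hmin' : ∀ i, l imin ≤ l i := fun i => hmin i (Finset.mem_univ i)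
  have hrange : ∀ i, l i = l imin ∨ l i = l imin + 1 := by
    intro i
    have h1 := hmin' i
    have h2 := hbal i imin
    omega
  set a := l imin with ha
  set T := Finset.univ.filter (fun i => l i = a + 1) with hT
  set t := T.card with ht
  have htm : t ≤ m := le_trans (Finset.card_filter_le _ _) (by simp)
  have hsum2 : n = m * a + t := by
    have : ∀ i ∈ Finset.univ, l i = a + (if i ∈ T then 1 else 0) := by
      intro i _
      rcases hrange i with h | h
      · have hni : i ∉ T := by
          rw [hT, Finset.mem_filter]
          simp only [Finset.mem_univ, true_and]
          omega
        rw [if_neg hni]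
        omega
      · have hyi : i ∈ T := by
          rw [hT, Finset.mem_filter]
          exact ⟨Finset.mem_univ i, h⟩
        rw [if_pos hyi]
        omega
    rw [← hsum, Finset.sum_congr rfl this, Finset.sum_add_distrib,
      Finset.sum_const, Finset.sum_ite_mem, Finset.univ_inter, Finset.sum_const]
    simp [Finset.card_univ, mul_comm]
    exact ht.symm
  rcases eq_or_lt_of_le htm with htm' | htm'
  · -- t = m : all values are a+1; use q = a+1, r = 0
    have hallT : T = Finset.univ := Finset.eq_univ_of_card _ (by rw [← ht, htm', Fintype.card_fin])
    have hall : ∀ i, l i = (a + 1) := by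
      intro i
      have : i ∈ T := hallT ▸ Finset.mem_univ i
      rw [hT, Finset.mem_filter] at this
      exact this.2
    have hn : n = m * (a + 1) := by rw [hsum2, htm']; ring
    have hdiv : n / m = a + 1 ∧ n % m = 0 := by
      constructor
      · rw [hn]; exact Nat.mul_div_cancel_left _ hm0
      · rw [hn]; exact Nat.mul_mod_right m (a + 1)
    have := FF_of hm l (a + 1) 0 hm0 (fun i => Or.inl (hall i))
      (by rw [Finset.card_eq_zero, Finset.filter_eq_empty_iff]; intro i _; rw [hall i]; omega)
    rw [this, BB, hdiv.1, hdiv.2]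
  · -- t < m : q = a, r = t
    have hn : n = m * a + t := hsum2
    have hdiv : n / m = a ∧ n % m = t := by
      constructor
      · rw [hn, Nat.mul_add_div hm0, Nat.div_eq_of_lt htm']; omega
      · rw [hn, Nat.mul_add_mod, Nat.mod_eq_of_lt htm']
    have := FF_of hm l a t htm' hrange (by rw [← hT, ← ht])
    rw [this, BB, hdiv.1, hdiv.2]

lemma arith_main (hm : 2 ≤ m) (n : ℕ) :
    ∀ N (l : Fin m → ℕ), ∑ i, (l i) * (l i) = N → ∑ i, l i = n → BB m n ≤ FF l := by
  haveI : Nonempty (Fin m) := ⟨⟨0, by omega⟩⟩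
  intro N
  induction N using Nat.strong_induction_on with
  | _ N IH =>
    intro l hN hsum
    by_cases hb : ∀ i j, l i ≤ l j + 1
    · exact le_of_eq (balanced_eq hm l hsum hb).symm
    · push_neg at hb
      obtain ⟨i1, j0, hgap0⟩ := hb
      obtain ⟨i0, -, hmax⟩ := Finset.exists_max_image Finset.univ l Finset.univ_nonempty
      have hmax' : ∀ j, l j ≤ l i0 := fun j => hmax j (Finset.mem_univ j)
      have hgap : l j0 + 2 ≤ l i0 := by
        have := hmax' i1
        omega
      have hne : j0 ≠ i0 := fun h => by rw [h] at hgap; omega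
      set lt : Fin m → ℕ := fun i => if i = i0 then l i0 - 1 else if i = j0 then l j0 + 1 else l i with hlt
      have hlt0 : lt i0 = l i0 - 1 := by simp [hlt]
      have hlt1 : lt j0 = l j0 + 1 := by simp [hlt, hne]
      have hlt2 : ∀ i, i ≠ i0 → i ≠ j0 → lt i = l i := by
        intro i h1 h2; simp [hlt, h1, h2]
      have hFF : FF lt ≤ FF l := smooth l lt i0 j0 hmax' hgap hlt0 hlt1 hlt2
      have key : ∀ g : Fin m → ℕ, ∑ i, g i = g i0 + g j0 + ∑ i ∈ (Finset.univ.erase i0).erase j0, g i :=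
        fun g => sum_split i0 j0 hne.symm g
      have hrest_eq : ∑ i ∈ (Finset.univ.erase i0).erase j0, lt i
          = ∑ i ∈ (Finset.univ.erase i0).erase j0, l i := by
        apply Finset.sum_congr rfl
        intro i hi
        rw [Finset.mem_erase, Finset.mem_erase] at hi
        exact hlt2 i hi.2.1 hi.1
      have hrest_eq2 : ∑ i ∈ (Finset.univ.erase i0).erase j0, lt i * lt i
          = ∑ i ∈ (Finset.univ.erase i0).erase j0, l i * l i := by
        apply Finset.sum_congr rfl
        intro i hi
        rw [Finset.mem_erase, Finset.mem_erase] at hi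
        rw [hlt2 i hi.2.1 hi.1]
      have hsum' : ∑ i, lt i = n := by
        rw [key lt, hlt0, hlt1, hrest_eq]
        rw [key l] at hsum
        omega
      have hsq : ∑ i, lt i * lt i < N := by
        rw [key (fun i => lt i * lt i), hlt0, hlt1, hrest_eq2]
        rw [key (fun i => l i * l i)] at hN
        have h1 : (l i0 - 1) * (l i0 - 1) + (l j0 + 1) * (l j0 + 1) < l i0 * l i0 + l j0 * l j0 := by
          have h2 : l i0 - 1 + 1 = l i0 := by omega
          nlinarith [h2, hgap]
        omega
      exact le_trans (IH _ hsq lt rfl hsum') hFF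

end S13

namespace S13


variable {m : ℕ} {l : Fin m → ℕ}

lemma kmn_adj_cases {p q : (i : Fin m) × Fin (l i)} (h : (Kmn m l).Adj p q) :
    (p.1 = q.1 ∧ (p.2.val + 1 = q.2.val ∨ q.2.val + 1 = p.2.val)) ∨
    (p.1 ≠ q.1 ∧ p.2.val = 0 ∧ q.2.val = 0) := by
  rw [Kmn, SimpleGraph.fromRel_adj] at h
  rcases h with ⟨-, h | h⟩
  · rcases h with ⟨h1, h2⟩ | ⟨h1, h2, h3⟩
    · exact Or.inl ⟨h1, Or.inl h2⟩
    · exact Or.inr ⟨h1, h2, h3⟩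
  · rcases h with ⟨h1, h2⟩ | ⟨h1, h2, h3⟩
    · exact Or.inl ⟨h1.symm, Or.inr h2⟩
    · exact Or.inr ⟨fun e => h1 e.symm, h3, h2⟩

lemma kmn_adj_step {i : Fin m} {a b : Fin (l i)} (h : a.val + 1 = b.val) :
    (Kmn m l).Adj ⟨i, a⟩ ⟨i, b⟩ := by
  rw [Kmn, SimpleGraph.fromRel_adj]
  refine ⟨?_, Or.inl (Or.inl ⟨rfl, h⟩)⟩
  intro hc
  have := congrArg (fun p : (i : Fin m) × Fin (l i) => (p.2.val : ℕ)) hc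
  simp only at this
  omega

lemma kmn_adj_cross {i j : Fin m} (hij : i ≠ j) {a : Fin (l i)} {b : Fin (l j)}
    (ha : a.val = 0) (hb : b.val = 0) : (Kmn m l).Adj ⟨i, a⟩ ⟨j, b⟩ := by
  rw [Kmn, SimpleGraph.fromRel_adj]
  exact ⟨fun hc => hij (congrArg Sigma.fst hc), Or.inl (Or.inr ⟨hij, ha, hb⟩)⟩

lemma kmn_walk_down (i : Fin m) : ∀ (k : ℕ) (a b : Fin (l i)), b.val + k = a.val →
    ∃ w : (Kmn m l).Walk ⟨i, a⟩ ⟨i, b⟩, w.length = k := by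
  intro k
  induction k with
  | zero =>
    intro a b hab
    have : a = b := Fin.ext (by omega)
    subst this
    exact ⟨SimpleGraph.Walk.nil, rfl⟩
  | succ k ih =>
    intro a b hab
    have ha1 : a.val - 1 < l i := by omega
    have hadj : (Kmn m l).Adj ⟨i, a⟩ ⟨i, (⟨a.val - 1, ha1⟩ : Fin (l i))⟩ :=
      (kmn_adj_step (by simp; omega)).symm
    obtain ⟨w, hw⟩ := ih ⟨a.val - 1, ha1⟩ b (by simp; omega)
    exact ⟨SimpleGraph.Walk.cons hadj w, by simp [hw]⟩

lemma kmn_dist_same (i : Fin m) (a b : Fin (l i)) :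
    (Kmn m l).dist ⟨i, a⟩ ⟨i, b⟩ ≤ max (a.val - b.val) (b.val - a.val) := by
  rcases le_total b.val a.val with h | h
  · obtain ⟨w, hw⟩ := kmn_walk_down i (a.val - b.val) a b (by omega)
    exact le_trans (SimpleGraph.dist_le w) (by omega)
  · obtain ⟨w, hw⟩ := kmn_walk_down i (b.val - a.val) b a (by omega)
    refine le_trans (SimpleGraph.dist_le w.reverse) ?_
    rw [SimpleGraph.Walk.length_reverse, hw]
    omega

lemma kmn_walk_cross {i j : Fin m} (hij : i ≠ j) (hi : 0 < l i) (hj : 0 < l j)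
    (a : Fin (l i)) (b : Fin (l j)) :
    ∃ w : (Kmn m l).Walk ⟨i, a⟩ ⟨j, b⟩, w.length = a.val + b.val + 1 := by
  obtain ⟨w1, hw1⟩ := kmn_walk_down i a.val a ⟨0, hi⟩ (by simp)
  obtain ⟨w2, hw2⟩ := kmn_walk_down j b.val b ⟨0, hj⟩ (by simp)
  have hadj : (Kmn m l).Adj ⟨i, (⟨0, hi⟩ : Fin (l i))⟩ ⟨j, (⟨0, hj⟩ : Fin (l j))⟩ :=
    kmn_adj_cross hij rfl rfl
  refine ⟨w1.append (SimpleGraph.Walk.cons hadj w2.reverse), ?_⟩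
  rw [SimpleGraph.Walk.length_append, SimpleGraph.Walk.length_cons,
    SimpleGraph.Walk.length_reverse, hw1, hw2]
  omega

lemma kmn_dist_cross {i j : Fin m} (hij : i ≠ j) (hi : 0 < l i) (hj : 0 < l j)
    (a : Fin (l i)) (b : Fin (l j)) :
    (Kmn m l).dist ⟨i, a⟩ ⟨j, b⟩ ≤ a.val + b.val + 1 := by
  obtain ⟨w, hw⟩ := kmn_walk_cross hij hi hj a b
  exact le_trans (SimpleGraph.dist_le w) (le_of_eq hw)

lemma walk_lip {V' : Type*} {G : SimpleGraph V'} (f : V' → ℤ)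
    (hf : ∀ ⦃x y⦄, G.Adj x y → |f x - f y| ≤ 1) :
    ∀ {u v : V'} (w : G.Walk u v), |f u - f v| ≤ (w.length : ℤ) := by
  intro u v w
  induction w with
  | nil => simp
  | @cons u' v' w' h p ih =>
    rw [SimpleGraph.Walk.length_cons]
    calc |f u' - f w'| ≤ |f u' - f v'| + |f v' - f w'| := abs_sub_le _ _ _
      _ ≤ 1 + p.length := add_le_add (hf h) ih
      _ ≤ _ := by push_cast; omega

lemma dist_lip {V' : Type*} {G : SimpleGraph V'} (f : V' → ℤ)
    (hf : ∀ ⦃x y⦄, G.Adj x y → |f x - f y| ≤ 1) {u v : V'} (h : G.Reachable u v) :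
    |f u - f v| ≤ (G.dist u v : ℤ) := by
  obtain ⟨w, hw⟩ := h.exists_walk_length_eq_dist
  rw [← hw]
  exact walk_lip f hf w

def fdepth {m : ℕ} {l : Fin m → ℕ} : ((j : Fin m) × Fin (l j)) → ℤ := fun p => (p.2.val : ℤ)

def fcross {m : ℕ} {l : Fin m → ℕ} (i : Fin m) : ((j : Fin m) × Fin (l j)) → ℤ :=
  fun p => if p.1 = i then -(p.2.val : ℤ) else (p.2.val : ℤ) + 1

lemma fdepth_lip : ∀ ⦃x y : (j : Fin m) × Fin (l j)⦄, (Kmn m l).Adj x y →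
    |fdepth x - fdepth y| ≤ 1 := by
  intro x y hxy
  unfold fdepth
  rcases kmn_adj_cases hxy with ⟨h1, h2 | h2⟩ | ⟨h1, h2, h3⟩ <;> (rw [abs_le]; constructor <;> omega)

lemma fcross_lip (i : Fin m) : ∀ ⦃x y : (j : Fin m) × Fin (l j)⦄, (Kmn m l).Adj x y →
    |fcross i x - fcross i y| ≤ 1 := by
  intro x y hxy
  unfold fcross
  rcases kmn_adj_cases hxy with ⟨h1, h2 | h2⟩ | ⟨h1, h2, h3⟩
  · by_cases hxi : x.1 = i
    · rw [if_pos hxi, if_pos (h1.symm.trans hxi), abs_le]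
      constructor <;> omega
    · rw [if_neg hxi, if_neg (fun h => hxi (h1.trans h)), abs_le]
      constructor <;> omega
  · by_cases hxi : x.1 = i
    · rw [if_pos hxi, if_pos (h1.symm.trans hxi), abs_le]
      constructor <;> omega
    · rw [if_neg hxi, if_neg (fun h => hxi (h1.trans h)), abs_le]
      constructor <;> omega
  · by_cases hxi : x.1 = i
    · have hyi : y.1 ≠ i := fun h => h1 (hxi.trans h.symm)
      rw [if_pos hxi, if_neg hyi, abs_le]
      constructor <;> omega
    · by_cases hyi : y.1 = i
      · rw [if_neg hxi, if_pos hyi, abs_le]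
        constructor <;> omega
      · rw [if_neg hxi, if_neg hyi, abs_le]
        constructor <;> omega

lemma ecc_eq (hm : 2 ≤ m) (hpos : ∀ i, 1 ≤ l i) (i : Fin m) (d : Fin (l i)) :
    ecc (Kmn m l) ⟨i, d⟩ = max (l i - 1 - d.val) (d.val + MM l i) := by
  haveI : Nonempty ((j : Fin m) × Fin (l j)) :=
    ⟨⟨⟨0, by omega⟩, ⟨0, hpos _⟩⟩⟩
  have hd := d.isLt
  have hbdd : BddAbove (Set.range fun u => (Kmn m l).dist ⟨i, d⟩ u) :=
    Set.Finite.bddAbove (Set.finite_range _)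
  apply le_antisymm
  · rw [ecc]
    apply ciSup_le
    rintro ⟨j, b⟩
    have hb := b.isLt
    by_cases hji : j = i
    · subst hji
      refine le_trans (kmn_dist_same j d b) ?_
      apply max_le
      · exact le_trans (by omega) (le_max_right (l j - 1 - d.val) (d.val + MM l j))
      · exact le_trans (by omega : b.val - d.val ≤ l j - 1 - d.val) (le_max_left _ _)
    · have hlj : l j ≤ MM l i := Finset.le_sup (Finset.mem_erase.mpr ⟨hji, Finset.mem_univ j⟩)
      refine le_trans (kmn_dist_cross (fun e => hji e.symm) (hpos i) (hpos j) d b) ?_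
      exact le_trans (by omega : d.val + b.val + 1 ≤ d.val + MM l i) (le_max_right _ _)
  · apply max_le
    · have hbl : l i - 1 < l i := by omega
      obtain ⟨w, hw⟩ := kmn_walk_down i (l i - 1 - d.val)
        ⟨l i - 1, hbl⟩ d (by simp; omega)
      have hreach : (Kmn m l).Reachable ⟨i, d⟩ ⟨i, ⟨l i - 1, hbl⟩⟩ := ⟨w.reverse⟩
      have hlow := dist_lip fdepth fdepth_lip hreach
      unfold fdepth at hlow
      rw [abs_le] at hlow
      simp only at hlow
      have hkey : l i - 1 - d.val ≤ (Kmn m l).dist ⟨i, d⟩ ⟨i, ⟨l i - 1, hbl⟩⟩ := by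
        omega
      exact le_trans hkey (le_ciSup hbdd _)
    · have hen : (Finset.univ.erase i).Nonempty := by
        obtain ⟨j, hj⟩ := Fintype.exists_ne_of_one_lt_card (by simp; omega) i
        exact ⟨j, Finset.mem_erase.mpr ⟨hj, Finset.mem_univ j⟩⟩
      obtain ⟨js, hjsm, hsup⟩ := Finset.exists_mem_eq_sup _ hen l
      have hjsi : js ≠ i := (Finset.mem_erase.mp hjsm).1
      have hpj := hpos js
      have hbf : l js - 1 < l js := by omega
      obtain ⟨w, hw⟩ := kmn_walk_cross (fun e => hjsi e.symm) (hpos i) hpj d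
        (⟨l js - 1, hbf⟩ : Fin (l js))
      have hreach : (Kmn m l).Reachable ⟨i, d⟩ ⟨js, ⟨l js - 1, hbf⟩⟩ := ⟨w⟩
      have hlow := dist_lip (fcross i) (fcross_lip i) hreach
      have e1 : fcross i (⟨i, d⟩ : (j : Fin m) × Fin (l j)) = -(d.val : ℤ) := by
        simp [fcross]
      have e2 : fcross i (⟨js, ⟨l js - 1, hbf⟩⟩ : (j : Fin m) × Fin (l j))
          = ((l js - 1 : ℕ) : ℤ) + 1 := by
        simp [fcross, hjsi]
      rw [e1, e2, abs_le] at hlow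
      have hkey : d.val + MM l i ≤ (Kmn m l).dist ⟨i, d⟩ ⟨js, ⟨l js - 1, hbf⟩⟩ := by
        rw [MM, hsup]
        omega
      exact le_trans hkey (le_ciSup hbdd _)

lemma totalEcc_eq (hm : 2 ≤ m) (hpos : ∀ i, 1 ≤ l i) : totalEcc (Kmn m l) = FF l := by
  rw [totalEcc, ← Finset.univ_sigma_univ, Finset.sum_sigma, FF]
  apply Finset.sum_congr rfl
  intro i _
  rw [ff, ← Fin.sum_univ_eq_sum_range (fun d => max (l i - 1 - d) (d + MM l i)) (l i)]
  apply Finset.sum_congr rfl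
  intro d _
  exact ecc_eq hm hpos i d

end S13

-- STATEMENT 13
theorem stmt13 (n s : ℕ) (hn : 2 ≤ n) (hs : s ≤ n - 2)
    (l l' : Fin (n - s) → ℕ)
    (hpos : ∀ i, 1 ≤ l i) (hsum : ∑ i, l i = n)
    (hpos' : ∀ i, 1 ≤ l' i) (hsum' : ∑ i, l' i = n)
    (hbal : ∀ i j, l' i ≤ l' j + 1) :
    totalEcc (Kmn (n - s) l') ≤ totalEcc (Kmn (n - s) l) := by
  have hm : 2 ≤ n - s := by omega
  calc totalEcc (Kmn (n - s) l') = S13.FF l' := S13.totalEcc_eq hm hpos'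
    _ = S13.BB (n - s) n := S13.balanced_eq hm l' hsum' hbal
    _ ≤ S13.FF l := S13.arith_main hm n _ l rfl hsum
    _ = totalEcc (Kmn (n - s) l) := (S13.totalEcc_eq hm hpos).symm
end

section
/- Let n ≥ 3 and let G be a connected graph on n vertices with no cut vertex. Then ε(G) ≤ n·⌊n/2⌋, and the cycle C_n attains this bound, i.e., ε(C_n) = n·⌊n/2⌋. -/
open SimpleGraph

open SimpleGraph Finset

section Aux

variable {V : Type*}

/-- Discrete intermediate value theorem along a walk. -/
lemma walk_ivt {G : SimpleGraph V} (hG : G.Connected) (u : V) {a b : V} (p : G.Walk a b) :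
    ∀ (i : ℕ), G.dist u a ≤ i → i ≤ G.dist u b →
      ∃ x ∈ p.support, G.dist u x = i := by
  induction p with
  | @nil a =>
    intro i h1 h2
    exact ⟨a, by simp, le_antisymm h1 h2⟩
  | @cons a c b h q ih =>
    intro i h1 h2
    rcases eq_or_lt_of_le h1 with heq | hlt
    · exact ⟨a, by simp, heq⟩
    · have hac : G.dist a c = 1 := (SimpleGraph.dist_eq_one_iff_adj).mpr h
      have htri : G.dist u c ≤ G.dist u a + G.dist a c := hG.dist_triangle
      have hc : G.dist u c ≤ i := by omega
      obtain ⟨x, hx, hxd⟩ := ih i hc h2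
      refine ⟨x, ?_, hxd⟩
      rw [SimpleGraph.Walk.support_cons]
      exact List.mem_cons_of_mem _ hx

lemma two_mul_dist_le [Fintype V] {G : SimpleGraph V} (hG : G.Connected)
    (hcut : ∀ w, ¬ IsCutVertex G w) (u v : V) : 2 * G.dist u v ≤ Fintype.card V := by
  classical
  set d := G.dist u v with hd
  rcases Nat.eq_zero_or_pos d with h0 | hpos
  · simp [h0]
  set S : ℕ → Finset V := fun i => univ.filter (fun x => G.dist u x = i) with hS
  have hmemS : ∀ x i, x ∈ S i ↔ G.dist u x = i := by intro x i; simp [hS]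
  have hdu : G.dist u u ≤ 0 := by simp
  have hmem : ∀ i, i ≤ d → ∃ x, x ∈ S i := by
    intro i hi
    obtain ⟨p⟩ := hG.preconnected u v
    obtain ⟨x, _, hxd⟩ := walk_ivt hG u p i (by omega) (by omega)
    exact ⟨x, (hmemS x i).mpr hxd⟩
  have hS2 : ∀ i, 1 ≤ i → i < d → 2 ≤ (S i).card := by
    intro i h1 h2
    obtain ⟨w, hw⟩ := hmem i h2.le
    have hwd : G.dist u w = i := (hmemS w i).mp hw
    by_contra hlt
    push_neg at hlt
    have huniq : ∀ x, G.dist u x = i → x = w := by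
      intro x hx
      exact Finset.card_le_one.mp (by omega) x ((hmemS x i).mpr hx) w hw
    refine hcut w ?_
    intro hconn
    have hu : u ≠ w := by intro h; rw [← h, SimpleGraph.dist_self] at hwd; omega
    have hv : v ≠ w := by intro h; rw [← h] at hwd; omega
    obtain ⟨q⟩ := hconn.preconnected ⟨u, hu⟩ ⟨v, hv⟩
    have hu' : ((SimpleGraph.Embedding.induce (G := G) {x | x ≠ w}).toHom ⟨u, hu⟩ : V) = u := rfl
    have hv' : ((SimpleGraph.Embedding.induce (G := G) {x | x ≠ w}).toHom ⟨v, hv⟩ : V) = v := rfl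
    obtain ⟨x, hxs, hxd⟩ := walk_ivt hG u
      ((q.map (SimpleGraph.Embedding.induce (G := G) {x | x ≠ w}).toHom).copy hu' hv') i
      (by omega) (by omega)
    rw [SimpleGraph.Walk.support_copy, SimpleGraph.Walk.support_map] at hxs
    obtain ⟨y, hy, rfl⟩ := List.mem_map.mp hxs
    exact y.2 (huniq _ hxd)
  have hu0 : 1 ≤ (S 0).card :=
    Finset.card_pos.mpr ⟨u, (hmemS u 0).mpr (by simp)⟩
  have hvd : 1 ≤ (S d).card := Finset.card_pos.mpr ⟨v, (hmemS v d).mpr rfl⟩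
  have hdisj : ∀ i ∈ Finset.range (d + 1), ∀ j ∈ Finset.range (d + 1), i ≠ j →
      Disjoint (S i) (S j) := by
    intro i _ j _ hij
    rw [Finset.disjoint_left]
    intro x hxi hxj
    exact hij (by rw [← (hmemS x i).mp hxi, ← (hmemS x j).mp hxj])
  have hcard : ∑ i ∈ Finset.range (d + 1), (S i).card ≤ Fintype.card V := by
    rw [← Finset.card_biUnion hdisj]
    exact Finset.card_le_univ _
  have hsplit : Finset.range (d + 1) = insert 0 (insert d (Finset.Ico 1 d)) := by
    ext i
    simp only [Finset.mem_range, Finset.mem_insert, Finset.mem_Ico]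
    omega
  have h0ni : (0 : ℕ) ∉ insert d (Finset.Ico 1 d) := by
    simp only [Finset.mem_insert, Finset.mem_Ico]; omega
  have hdni : d ∉ Finset.Ico 1 d := by simp
  have hIco : 2 * (d - 1) ≤ ∑ i ∈ Finset.Ico 1 d, (S i).card := by
    calc 2 * (d - 1) = ∑ _i ∈ Finset.Ico 1 d, 2 := by
          rw [Finset.sum_const, Nat.card_Ico, smul_eq_mul]; omega
    _ ≤ _ := Finset.sum_le_sum (fun i hi => by
          rw [Finset.mem_Ico] at hi; exact hS2 i hi.1 hi.2)
  rw [hsplit, Finset.sum_insert h0ni, Finset.sum_insert hdni] at hcard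
  omega

end Aux

section Cyc

open Fin.CommRing

variable {n : ℕ} [NeZero n]

lemma fin_val_neg (hn : 2 ≤ n) (x : Fin n) (hx : x ≠ 0) : (-x).val = n - x.val := by
  have hxv : 0 < x.val := by
    rcases Nat.eq_zero_or_pos x.val with h | h
    · exact absurd (Fin.ext h) hx
    · exact h
  rw [← zero_sub, Fin.sub_def]
  simp only [Fin.val_zero, Nat.zero_add]
  exact Nat.mod_eq_of_lt (by omega)

lemma fin_val_one' (hn : 2 ≤ n) : ((1 : Fin n)).val = 1 := by
  rw [Fin.val_one']
  exact Nat.mod_eq_of_lt (by omega)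

lemma fin_val_add_one (hn : 2 ≤ n) (x : Fin n) :
    (x + 1).val = if x.val + 1 = n then 0 else x.val + 1 := by
  rw [Fin.val_add, fin_val_one' hn]
  have := x.isLt
  split <;> rename_i h
  · rw [h, Nat.mod_self]
  · exact Nat.mod_eq_of_lt (by omega)

lemma fin_val_sub_one (hn : 2 ≤ n) (x : Fin n) :
    (x - 1).val = if x.val = 0 then n - 1 else x.val - 1 := by
  rw [Fin.coe_sub, fin_val_one' hn]
  have := x.isLt
  split <;> rename_i h
  · rw [h, Nat.add_zero]
    exact Nat.mod_eq_of_lt (by omega)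
  · have h2 : (n - 1) + x.val = (x.val - 1) + n := by omega
    rw [h2, Nat.add_mod_right]
    exact Nat.mod_eq_of_lt (by omega)

lemma cycle_walk_lb (hn : 2 ≤ n) {a b : Fin n} (p : (cycleGraph n).Walk a b) :
    min (b - a).val (n - (b - a).val) ≤ p.length := by
  induction p with
  | nil => simp [sub_self]
  | @cons a c b h q ih =>
    rw [SimpleGraph.cycleGraph_adj'] at h
    rw [SimpleGraph.Walk.length_cons]
    have hk := (b - c).isLt
    rcases h with h | h
    · have hac : a - c = 1 := Fin.ext (by rw [h, fin_val_one' hn])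
      have hba : b - a = (b - c) - 1 := by rw [← hac]; ring
      rw [hba, fin_val_sub_one hn]
      split <;> omega
    · have hca : c - a = 1 := Fin.ext (by rw [h, fin_val_one' hn])
      have hba : b - a = (b - c) + 1 := by rw [← hca]; ring
      rw [hba, fin_val_add_one hn]
      split <;> omega

lemma cycle_connected' (hn : 2 ≤ n) : (cycleGraph n).Connected := by
  obtain ⟨m, rfl⟩ : ∃ m, n = m + 1 := ⟨n - 1, by omega⟩
  exact SimpleGraph.cycleGraph_connected

lemma cycle_dist_add (hn : 2 ≤ n) (a : Fin n) (j : ℕ) :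
    (cycleGraph n).dist a (a + (j : Fin n)) ≤ j := by
  induction j with
  | zero => simp
  | succ j ih =>
    have hadj : (cycleGraph n).Adj (a + (j : Fin n)) (a + (j : Fin n) + 1) := by
      rw [SimpleGraph.cycleGraph_adj']
      right
      have h1 : a + (j : Fin n) + 1 - (a + (j : Fin n)) = 1 := by ring
      rw [h1, fin_val_one' hn]
    have heq : a + ((j + 1 : ℕ) : Fin n) = a + (j : Fin n) + 1 := by
      push_cast
      ring
    rw [heq]
    calc (cycleGraph n).dist a (a + (j : Fin n) + 1)
        ≤ (cycleGraph n).dist a (a + (j : Fin n))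
          + (cycleGraph n).dist (a + (j : Fin n)) (a + (j : Fin n) + 1) :=
          (cycle_connected' hn).dist_triangle
      _ ≤ j + 1 := by
          rw [SimpleGraph.dist_eq_one_iff_adj.mpr hadj]; omega

lemma cycle_dist_eq (hn : 2 ≤ n) (a b : Fin n) :
    (cycleGraph n).dist a b = min (b - a).val (n - (b - a).val) := by
  refine le_antisymm ?_ ?_
  · rcases eq_or_ne a b with rfl | hab
    · simp
    · refine le_min ?_ ?_
      · have h := cycle_dist_add hn a (b - a).val
        have h2 : a + (((b - a).val : ℕ) : Fin n) = b := by
          rw [Fin.cast_val_eq_self]; ring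
        rwa [h2] at h
      · have hba : b - a ≠ 0 := by
          intro h
          exact hab (sub_eq_zero.mp h).symm
        have h1 : (a - b).val = n - (b - a).val := by
          have hs : a - b = -(b - a) := by ring
          rw [hs, fin_val_neg hn _ hba]
        have h := cycle_dist_add hn b (a - b).val
        have h2 : b + (((a - b).val : ℕ) : Fin n) = a := by
          rw [Fin.cast_val_eq_self]; ring
        rw [h2] at h
        rw [SimpleGraph.dist_comm]
        omega
  · obtain ⟨p, hp⟩ := (cycle_connected' hn).exists_walk_length_eq_dist a b
    have := cycle_walk_lb hn p
    omega

lemma ecc_cycle (hn : 3 ≤ n) (v : Fin n) : ecc (cycleGraph n) v = n / 2 := by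
  have hn2 : 2 ≤ n := by omega
  haveI : Nonempty (Fin n) := ⟨⟨0, by omega⟩⟩
  refine le_antisymm ?_ ?_
  · refine ciSup_le fun u => ?_
    rw [cycle_dist_eq hn2]
    have := (u - v).isLt
    omega
  · have hd : (cycleGraph n).dist v (v + ((n / 2 : ℕ) : Fin n)) = n / 2 := by
      rw [cycle_dist_eq hn2, add_sub_cancel_left, Fin.val_cast_of_lt (by omega)]
      omega
    calc (n : ℕ) / 2 = (cycleGraph n).dist v (v + ((n / 2 : ℕ) : Fin n)) := hd.symm
      _ ≤ ecc (cycleGraph n) v :=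
          le_ciSup (Set.Finite.bddAbove (Set.finite_range _)) _

end Cyc

theorem stmt15' {V : Type*} [Fintype V] (G : SimpleGraph V) (hG : G.Connected)
    (n : ℕ) (hn : 3 ≤ n) (hcard : Fintype.card V = n)
    (hcut : ∀ w, ¬ IsCutVertex G w) :
    totalEcc G ≤ n * (n / 2) ∧ totalEcc (cycleGraph n) = n * (n / 2) := by
  haveI : NeZero n := ⟨by omega⟩
  constructor
  · haveI : Nonempty V := by
      rw [← Fintype.card_pos_iff, hcard]; omega
    have hecc : ∀ v : V, ecc G v ≤ n / 2 := by
      intro v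
      refine ciSup_le fun u => ?_
      have := two_mul_dist_le hG hcut v u
      rw [hcard] at this
      omega
    calc totalEcc G ≤ ∑ _v : V, n / 2 := Finset.sum_le_sum (fun v _ => hecc v)
      _ = n * (n / 2) := by
        rw [Finset.sum_const, Finset.card_univ, hcard, smul_eq_mul]
  · have h : totalEcc (cycleGraph n) = ∑ _v : Fin n, n / 2 :=
      Finset.sum_congr rfl (fun v _ => ecc_cycle hn v)
    rw [h, Finset.sum_const, Finset.card_univ, Fintype.card_fin, smul_eq_mul]

-- STATEMENT 15
theorem stmt15 {V : Type*} [Fintype V] (G : SimpleGraph V) (hG : G.Connected)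
    (n : ℕ) (hn : 3 ≤ n) (hcard : Fintype.card V = n)
    (hcut : ∀ w, ¬ IsCutVertex G w) :
    totalEcc G ≤ n * (n / 2) ∧ totalEcc (cycleGraph n) = n * (n / 2) := by
  exact stmt15' G hG n hn hcard hcut
end

section
/- Let H be a connected graph with at least two vertices, let w ∈ V(H), and let m_1, m_2 ≥ 3. Let G be the graph obtained from H, the cycle C_{m_1} and the cycle C_{m_2} by identifying the vertex w, a vertex of C_{m_1} and a vertex of C_{m_2} into a single vertex. Let G' be the graph obtained from H and the cycle C_{m_1+m_2−1} by identifying w with a vertex of C_{m_1+m_2−1}. Then ε(G') ≥ ε(G). -/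
open SimpleGraph

section StmtSixteenAux

open SimpleGraph

private lemma ecc_le' {W : Type*} [Fintype W] [Nonempty W] {G : SimpleGraph W} {v : W} {k : ℕ}
    (h : ∀ u, G.dist v u ≤ k) : ecc G v ≤ k := ciSup_le h

private lemma le_ecc' {W : Type*} [Fintype W] (G : SimpleGraph W) (v u : W) :
    G.dist v u ≤ ecc G v :=
  le_ciSup (Set.Finite.bddAbove (Set.finite_range _)) u

private lemma sum_le_sum_inj {α β : Type*} [Fintype α] [Fintype β] (φ : α → β)
    (hφ : Function.Injective φ) (f : α → ℕ) (g : β → ℕ) (h : ∀ x, f x ≤ g (φ x)) :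
    ∑ x, f x ≤ ∑ y, g y := by
  classical
  calc ∑ x, f x ≤ ∑ x, g (φ x) := Finset.sum_le_sum (fun x _ => h x)
    _ = ∑ y ∈ Finset.univ.image φ, g y :=
        (Finset.sum_image (fun a _ b _ hab => hφ hab)).symm
    _ ≤ ∑ y, g y := Finset.sum_le_sum_of_subset (Finset.subset_univ _)

private lemma dist_le_one {W : Type*} {G : SimpleGraph W} {a b : W} (h : G.Adj a b) :
    G.dist a b ≤ 1 := by
  have := SimpleGraph.dist_le h.toWalk
  simpa [SimpleGraph.Adj.toWalk] using this

private lemma pot_le_walk {W : Type*} {G : SimpleGraph W} (f : W → ℕ)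
    (hf : ∀ a b, G.Adj a b → f b ≤ f a + 1) {x y : W} (p : G.Walk x y) :
    f y ≤ f x + p.length := by
  induction p with
  | nil => simp
  | cons h p ih =>
    have := hf _ _ h
    simp only [Walk.length_cons]
    omega

private lemma pot_le_dist {W : Type*} {G : SimpleGraph W} (f : W → ℕ)
    (hf : ∀ a b, G.Adj a b → f b ≤ f a + 1) {x y : W} (hr : G.Reachable x y)
    (hx : f x = 0) : f y ≤ G.dist x y := by
  obtain ⟨p, hp⟩ := hr.exists_walk_length_eq_dist
  have := pot_le_walk f hf p
  omega

variable {V : Type*} {H : SimpleGraph V} {w : V} {m1 m2 M : ℕ}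

private lemma hdist_step (hH : H.Connected) {a b : V} (v : V) (h : H.Adj a b) :
    H.dist v b ≤ H.dist v a + 1 := by
  have hab : H.dist a b ≤ 1 := by simpa using dist_le h.toWalk
  have := hH.dist_triangle (u := v) (v := a) (w := b)
  omega

/-! ### Potentials on `glueOneCycle` (lower bounds for distances) -/

private noncomputable def pot1 (H : SimpleGraph V) (w v : V) (M : ℕ) : V ⊕ Fin (M - 1) → ℕ
  | .inl u => H.dist v u
  | .inr i => H.dist v w + min (i.val + 1) (M - 1 - i.val)

private lemma pot1_lip (hH : H.Connected) (v : V) :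
    ∀ a b, (glueOneCycle H w M).Adj a b → pot1 H w v M b ≤ pot1 H w v M a + 1 := by
  intro a b hab
  rw [glueOneCycle, fromRel_adj] at hab
  obtain ⟨hne, h⟩ := hab
  rcases a with x | i <;> rcases b with y | j <;> simp only [pot1]
  · rcases h with h | h
    · exact hdist_step hH v h
    · exact hdist_step hH v h.symm
  · rcases h with ⟨rfl, h⟩ | h
    · have := j.isLt; omega
    · exact h.elim
  · rcases h with h | ⟨rfl, h⟩
    · exact h.elim
    · omega
  · have hi := i.isLt; have hj := j.isLt
    rcases h with h | h <;> omega

private noncomputable def pot2 (H : SimpleGraph V) (w : V) (M q : ℕ) : V ⊕ Fin (M - 1) → ℕ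
  | .inl u => min (q + 1) (M - 1 - q) + H.dist w u
  | .inr i => min (max q i.val - min q i.val) (M - (max q i.val - min q i.val))

private lemma pot2_lip (hH : H.Connected) (q : ℕ) (hq : q < M - 1) :
    ∀ a b, (glueOneCycle H w M).Adj a b → pot2 H w M q b ≤ pot2 H w M q a + 1 := by
  intro a b hab
  rw [glueOneCycle, fromRel_adj] at hab
  obtain ⟨hne, h⟩ := hab
  have h0 : H.dist w w = 0 := SimpleGraph.dist_self
  rcases a with x | i <;> rcases b with y | j <;> simp only [pot2]
  · rcases h with h | h
    · have := hdist_step hH w h; omega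
    · have := hdist_step hH w h.symm; omega
  · rcases h with ⟨rfl, h⟩ | h
    · have := j.isLt; rw [h0]; omega
    · exact h.elim
  · rcases h with h | ⟨rfl, h⟩
    · exact h.elim
    · have := i.isLt; rw [h0]; omega
  · have hi := i.isLt; have hj := j.isLt
    rcases h with h | h <;> omega

/-! ### Adjacency in the glued graphs -/

private lemma aG_H {x y : V} (h : H.Adj x y) :
    (glueTwoCycles H w m1 m2).Adj (.inl x) (.inl y) := by
  rw [glueTwoCycles, fromRel_adj]
  exact ⟨by simp [h.ne], Or.inl h⟩

private lemma aG_w1 (i : Fin (m1 - 1)) (h : i.val = 0 ∨ i.val + 2 = m1) :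
    (glueTwoCycles H w m1 m2).Adj (.inl w) (.inr (.inl i)) := by
  rw [glueTwoCycles, fromRel_adj]
  exact ⟨by simp, Or.inl ⟨rfl, h⟩⟩

private lemma aG_w2 (i : Fin (m2 - 1)) (h : i.val = 0 ∨ i.val + 2 = m2) :
    (glueTwoCycles H w m1 m2).Adj (.inl w) (.inr (.inr i)) := by
  rw [glueTwoCycles, fromRel_adj]
  exact ⟨by simp, Or.inl ⟨rfl, h⟩⟩

private lemma aG_c1 (i j : Fin (m1 - 1)) (h : i.val + 1 = j.val) :
    (glueTwoCycles H w m1 m2).Adj (.inr (.inl i)) (.inr (.inl j)) := by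
  rw [glueTwoCycles, fromRel_adj]
  refine ⟨?_, Or.inl h⟩
  simp only [ne_eq, Sum.inr.injEq, Sum.inl.injEq, Fin.ext_iff]
  omega

private lemma aG_c2 (i j : Fin (m2 - 1)) (h : i.val + 1 = j.val) :
    (glueTwoCycles H w m1 m2).Adj (.inr (.inr i)) (.inr (.inr j)) := by
  rw [glueTwoCycles, fromRel_adj]
  refine ⟨?_, Or.inl h⟩
  simp only [ne_eq, Sum.inr.injEq, Fin.ext_iff]
  omega

private lemma aO_H {x y : V} (h : H.Adj x y) :
    (glueOneCycle H w M).Adj (.inl x) (.inl y) := by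
  rw [glueOneCycle, fromRel_adj]
  exact ⟨by simp [h.ne], Or.inl h⟩

private lemma aO_w (i : Fin (M - 1)) (h : i.val = 0 ∨ i.val + 2 = M) :
    (glueOneCycle H w M).Adj (.inl w) (.inr i) := by
  rw [glueOneCycle, fromRel_adj]
  exact ⟨by simp, Or.inl ⟨rfl, h⟩⟩

private lemma aO_c (i j : Fin (M - 1)) (h : i.val + 1 = j.val) :
    (glueOneCycle H w M).Adj (.inr i) (.inr j) := by
  rw [glueOneCycle, fromRel_adj]
  refine ⟨?_, Or.inl h⟩
  simp only [ne_eq, Sum.inr.injEq, Fin.ext_iff]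
  omega

/-! ### Connectivity -/

private lemma reachG1 : ∀ k (hk : k < m1 - 1),
    (glueTwoCycles H w m1 m2).Reachable (.inl w) (.inr (.inl ⟨k, hk⟩)) := by
  intro k
  induction k with
  | zero => exact fun hk => (aG_w1 ⟨0, hk⟩ (Or.inl rfl)).reachable
  | succ k ih =>
    exact fun hk =>
      (ih (by omega)).trans (aG_c1 ⟨k, by omega⟩ ⟨k + 1, hk⟩ rfl).reachable

private lemma reachG2 : ∀ k (hk : k < m2 - 1),
    (glueTwoCycles H w m1 m2).Reachable (.inl w) (.inr (.inr ⟨k, hk⟩)) := by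
  intro k
  induction k with
  | zero => exact fun hk => (aG_w2 ⟨0, hk⟩ (Or.inl rfl)).reachable
  | succ k ih =>
    exact fun hk =>
      (ih (by omega)).trans (aG_c2 ⟨k, by omega⟩ ⟨k + 1, hk⟩ rfl).reachable

private lemma reachO : ∀ k (hk : k < M - 1),
    (glueOneCycle H w M).Reachable (.inl w) (.inr ⟨k, hk⟩) := by
  intro k
  induction k with
  | zero => exact fun hk => (aO_w ⟨0, hk⟩ (Or.inl rfl)).reachable
  | succ k ih =>
    exact fun hk =>
      (ih (by omega)).trans (aO_c ⟨k, by omega⟩ ⟨k + 1, hk⟩ rfl).reachable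

private lemma gconn (hH : H.Connected) : (glueTwoCycles H w m1 m2).Connected := by
  haveI : Nonempty (V ⊕ (Fin (m1 - 1) ⊕ Fin (m2 - 1))) := ⟨.inl w⟩
  have hr : ∀ x, (glueTwoCycles H w m1 m2).Reachable (.inl w) x := by
    intro x
    rcases x with v | (i | j)
    · exact (hH.preconnected w v).map ⟨Sum.inl, fun h => aG_H h⟩
    · exact reachG1 i.val i.isLt
    · exact reachG2 j.val j.isLt
  exact Connected.mk (fun a b => (hr a).symm.trans (hr b))

private lemma oconn (hH : H.Connected) : (glueOneCycle H w M).Connected := by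
  haveI : Nonempty (V ⊕ Fin (M - 1)) := ⟨.inl w⟩
  have hr : ∀ x, (glueOneCycle H w M).Reachable (.inl w) x := by
    intro x
    rcases x with v | i
    · exact (hH.preconnected w v).map ⟨Sum.inl, fun h => aO_H h⟩
    · exact reachO i.val i.isLt
  exact Connected.mk (fun a b => (hr a).symm.trans (hr b))

/-! ### Distance lower bounds in `glueOneCycle` -/

private lemma d1low (hH : H.Connected) (v : V) (y : V ⊕ Fin (M - 1)) :
    pot1 H w v M y ≤ (glueOneCycle H w M).dist (.inl v) y := by
  refine pot_le_dist _ (pot1_lip hH v) ((oconn hH).preconnected _ _) ?_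
  simp [pot1, SimpleGraph.dist_self]

private lemma d2low (hH : H.Connected) (q : Fin (M - 1)) (y : V ⊕ Fin (M - 1)) :
    pot2 H w M q.val y ≤ (glueOneCycle H w M).dist (.inr q) y := by
  refine pot_le_dist _ (pot2_lip hH q.val q.isLt) ((oconn hH).preconnected _ _) ?_
  simp [pot2]

/-! ### Distance upper bounds in `glueTwoCycles` -/

private lemma distG_inl (hH : H.Connected) (u v : V) :
    (glueTwoCycles H w m1 m2).dist (.inl u) (.inl v) ≤ H.dist u v := by
  obtain ⟨p, hp⟩ := hH.exists_walk_length_eq_dist u v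
  have := dist_le (p.map (⟨Sum.inl, fun h => aG_H h⟩ : H →g glueTwoCycles H w m1 m2))
  rwa [Walk.length_map, hp] at this

private lemma ub1a (hH : H.Connected) : ∀ k (hk : k < m1 - 1),
    (glueTwoCycles H w m1 m2).dist (.inl w) (.inr (.inl ⟨k, hk⟩)) ≤ k + 1 := by
  have gc := gconn (w := w) (m1 := m1) (m2 := m2) hH
  intro k
  induction k with
  | zero => exact fun hk => dist_le_one (aG_w1 ⟨0, hk⟩ (Or.inl rfl))
  | succ k ih =>
    intro hk
    have h3 := gc.dist_triangle (u := Sum.inl w)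
      (v := Sum.inr (Sum.inl ⟨k, by omega⟩)) (w := Sum.inr (Sum.inl ⟨k + 1, hk⟩))
    have hd : (glueTwoCycles H w m1 m2).dist
        (.inr (.inl ⟨k, by omega⟩)) (.inr (.inl ⟨k + 1, hk⟩)) ≤ 1 := by
      exact dist_le_one (aG_c1 ⟨k, by omega⟩ ⟨k + 1, hk⟩ rfl)
    have := ih (by omega)
    omega

private lemma ub1b (hH : H.Connected) (hm1 : 3 ≤ m1) : ∀ d k (hk : k < m1 - 1),
    k + d = m1 - 2 →
    (glueTwoCycles H w m1 m2).dist (.inl w) (.inr (.inl ⟨k, hk⟩)) ≤ d + 1 := by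
  have gc := gconn (w := w) (m1 := m1) (m2 := m2) hH
  intro d
  induction d with
  | zero =>
    intro k hk hke
    exact dist_le_one (aG_w1 ⟨k, hk⟩ (Or.inr (show k + 2 = m1 by omega)))
  | succ d ih =>
    intro k hk hke
    have hk1 : k + 1 < m1 - 1 := by omega
    have h3 := gc.dist_triangle (u := Sum.inl w)
      (v := Sum.inr (Sum.inl ⟨k + 1, hk1⟩)) (w := Sum.inr (Sum.inl ⟨k, hk⟩))
    have hd : (glueTwoCycles H w m1 m2).dist
        (.inr (.inl ⟨k + 1, hk1⟩)) (.inr (.inl ⟨k, hk⟩)) ≤ 1 := by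
      rw [SimpleGraph.dist_comm]
      exact dist_le_one (aG_c1 ⟨k, hk⟩ ⟨k + 1, hk1⟩ rfl)
    have := ih (k + 1) hk1 (by omega)
    omega

private lemma ub2a (hH : H.Connected) : ∀ k (hk : k < m2 - 1),
    (glueTwoCycles H w m1 m2).dist (.inl w) (.inr (.inr ⟨k, hk⟩)) ≤ k + 1 := by
  have gc := gconn (w := w) (m1 := m1) (m2 := m2) hH
  intro k
  induction k with
  | zero => exact fun hk => dist_le_one (aG_w2 ⟨0, hk⟩ (Or.inl rfl))
  | succ k ih =>
    intro hk
    have h3 := gc.dist_triangle (u := Sum.inl w)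
      (v := Sum.inr (Sum.inr ⟨k, by omega⟩)) (w := Sum.inr (Sum.inr ⟨k + 1, hk⟩))
    have hd : (glueTwoCycles H w m1 m2).dist
        (.inr (.inr ⟨k, by omega⟩)) (.inr (.inr ⟨k + 1, hk⟩)) ≤ 1 := by
      exact dist_le_one (aG_c2 ⟨k, by omega⟩ ⟨k + 1, hk⟩ rfl)
    have := ih (by omega)
    omega

private lemma ub2b (hH : H.Connected) (hm2 : 3 ≤ m2) : ∀ d k (hk : k < m2 - 1),
    k + d = m2 - 2 →
    (glueTwoCycles H w m1 m2).dist (.inl w) (.inr (.inr ⟨k, hk⟩)) ≤ d + 1 := by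
  have gc := gconn (w := w) (m1 := m1) (m2 := m2) hH
  intro d
  induction d with
  | zero =>
    intro k hk hke
    exact dist_le_one (aG_w2 ⟨k, hk⟩ (Or.inr (show k + 2 = m2 by omega)))
  | succ d ih =>
    intro k hk hke
    have hk1 : k + 1 < m2 - 1 := by omega
    have h3 := gc.dist_triangle (u := Sum.inl w)
      (v := Sum.inr (Sum.inr ⟨k + 1, hk1⟩)) (w := Sum.inr (Sum.inr ⟨k, hk⟩))
    have hd : (glueTwoCycles H w m1 m2).dist
        (.inr (.inr ⟨k + 1, hk1⟩)) (.inr (.inr ⟨k, hk⟩)) ≤ 1 := by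
      rw [SimpleGraph.dist_comm]
      exact dist_le_one (aG_c2 ⟨k, hk⟩ ⟨k + 1, hk1⟩ rfl)
    have := ih (k + 1) hk1 (by omega)
    omega

private lemma ub1 (hH : H.Connected) (hm1 : 3 ≤ m1) (i : Fin (m1 - 1)) :
    (glueTwoCycles H w m1 m2).dist (.inl w) (.inr (.inl i)) ≤
      min (i.val + 1) (m1 - 1 - i.val) := by
  have h1 := ub1a (w := w) (m2 := m2) hH i.val i.isLt
  have h2 := ub1b (w := w) (m2 := m2) hH hm1 (m1 - 2 - i.val) i.val i.isLt (by omega)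
  have hi := i.isLt
  simp only [Fin.eta] at h1 h2
  omega

private lemma ub2 (hH : H.Connected) (hm2 : 3 ≤ m2) (j : Fin (m2 - 1)) :
    (glueTwoCycles H w m1 m2).dist (.inl w) (.inr (.inr j)) ≤
      min (j.val + 1) (m2 - 1 - j.val) := by
  have h1 := ub2a (w := w) (m1 := m1) hH j.val j.isLt
  have h2 := ub2b (w := w) (m1 := m1) hH hm2 (m2 - 2 - j.val) j.val j.isLt (by omega)
  have hj := j.isLt
  simp only [Fin.eta] at h1 h2
  omega

private lemma chain1 (hH : H.Connected) : ∀ d k k' (hk : k < m1 - 1) (hk' : k' < m1 - 1),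
    k + d = k' →
    (glueTwoCycles H w m1 m2).dist (.inr (.inl ⟨k, hk⟩)) (.inr (.inl ⟨k', hk'⟩)) ≤ d := by
  have gc := gconn (w := w) (m1 := m1) (m2 := m2) hH
  intro d
  induction d with
  | zero =>
    intro k k' hk hk' he
    have hkk : k = k' := by omega
    subst hkk
    have : (glueTwoCycles H w m1 m2).dist
        (.inr (.inl ⟨k, hk⟩)) (.inr (.inl ⟨k, hk'⟩)) = 0 := SimpleGraph.dist_self
    omega
  | succ d ih =>
    intro k k' hk hk' he
    have hk1 : k + 1 < m1 - 1 := by omega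
    have h3 := gc.dist_triangle (u := Sum.inr (Sum.inl ⟨k, hk⟩))
      (v := Sum.inr (Sum.inl ⟨k + 1, hk1⟩)) (w := Sum.inr (Sum.inl ⟨k', hk'⟩))
    have hd : (glueTwoCycles H w m1 m2).dist
        (.inr (.inl ⟨k, hk⟩)) (.inr (.inl ⟨k + 1, hk1⟩)) ≤ 1 := by
      exact dist_le_one (aG_c1 ⟨k, hk⟩ ⟨k + 1, hk1⟩ rfl)
    have := ih (k + 1) k' hk1 hk' (by omega)
    omega

private lemma chain2 (hH : H.Connected) : ∀ d k k' (hk : k < m2 - 1) (hk' : k' < m2 - 1),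
    k + d = k' →
    (glueTwoCycles H w m1 m2).dist (.inr (.inr ⟨k, hk⟩)) (.inr (.inr ⟨k', hk'⟩)) ≤ d := by
  have gc := gconn (w := w) (m1 := m1) (m2 := m2) hH
  intro d
  induction d with
  | zero =>
    intro k k' hk hk' he
    have hkk : k = k' := by omega
    subst hkk
    have : (glueTwoCycles H w m1 m2).dist
        (.inr (.inr ⟨k, hk⟩)) (.inr (.inr ⟨k, hk'⟩)) = 0 := SimpleGraph.dist_self
    omega
  | succ d ih =>
    intro k k' hk hk' he
    have hk1 : k + 1 < m2 - 1 := by omega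
    have h3 := gc.dist_triangle (u := Sum.inr (Sum.inr ⟨k, hk⟩))
      (v := Sum.inr (Sum.inr ⟨k + 1, hk1⟩)) (w := Sum.inr (Sum.inr ⟨k', hk'⟩))
    have hd : (glueTwoCycles H w m1 m2).dist
        (.inr (.inr ⟨k, hk⟩)) (.inr (.inr ⟨k + 1, hk1⟩)) ≤ 1 := by
      exact dist_le_one (aG_c2 ⟨k, hk⟩ ⟨k + 1, hk1⟩ rfl)
    have := ih (k + 1) k' hk1 hk' (by omega)
    omega


/-! ### The explicit slot assignment -/

private def gg1 (m1 m2 i : ℕ) : ℕ :=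
  if i + 1 < m1 / 2 then i
  else if i + 1 = m1 / 2 then m1 / 2 + m2 / 2 - 2
  else if i + m1 / 2 + 1 = m1 then m1 / 2 + m2 / 2 - 1
  else m2 - 1 + i

private def gg2 (m1 m2 j : ℕ) : ℕ :=
  if j + 1 < m2 / 2 then m1 / 2 - 1 + j
  else if j + 1 = m2 / 2 then m1 + m2 - 2 - m1 / 2 - m2 / 2 + 1
  else if j + m2 / 2 + 1 = m2 then m1 + m2 - 2 - m1 / 2 - m2 / 2
  else m1 + m2 - 2 - m1 / 2 - (m2 - 1 - j) + 1

private lemma gg1_lt (hm1 : 3 ≤ m1) (hm2 : 3 ≤ m2) {i : ℕ} (hi : i < m1 - 1) :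
    gg1 m1 m2 i < m1 + m2 - 2 := by
  unfold gg1; split_ifs <;> omega

private lemma gg2_lt (hm1 : 3 ≤ m1) (hm2 : 3 ≤ m2) {j : ℕ} (hj : j < m2 - 1) :
    gg2 m1 m2 j < m1 + m2 - 2 := by
  unfold gg2; split_ifs <;> omega

private lemma gg1_inj (hm1 : 3 ≤ m1) (hm2 : 3 ≤ m2) {i i' : ℕ} (hi : i < m1 - 1)
    (hi' : i' < m1 - 1) (h : gg1 m1 m2 i = gg1 m1 m2 i') : i = i' := by
  unfold gg1 at h; split_ifs at h <;> omega

private lemma gg2_inj (hm1 : 3 ≤ m1) (hm2 : 3 ≤ m2) {j j' : ℕ} (hj : j < m2 - 1)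
    (hj' : j' < m2 - 1) (h : gg2 m1 m2 j = gg2 m1 m2 j') : j = j' := by
  unfold gg2 at h; split_ifs at h <;> omega

private lemma gg12_ne (hm1 : 3 ≤ m1) (hm2 : 3 ≤ m2) {i j : ℕ} (hi : i < m1 - 1)
    (hj : j < m2 - 1) : gg1 m1 m2 i ≠ gg2 m1 m2 j := by
  unfold gg1 gg2; split_ifs <;> omega

private lemma gg1_alpha (hm1 : 3 ≤ m1) (hm2 : 3 ≤ m2) {i : ℕ} (hi : i < m1 - 1) :
    min (i + 1) (m1 - 1 - i) ≤ min (gg1 m1 m2 i + 1) (m1 + m2 - 2 - gg1 m1 m2 i) := by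
  unfold gg1; split_ifs <;> omega

private lemma gg2_alpha (hm1 : 3 ≤ m1) (hm2 : 3 ≤ m2) {j : ℕ} (hj : j < m2 - 1) :
    min (j + 1) (m2 - 1 - j) ≤ min (gg2 m1 m2 j + 1) (m1 + m2 - 2 - gg2 m1 m2 j) := by
  unfold gg2; split_ifs <;> omega

private lemma gg1_beta (hm1 : 3 ≤ m1) (hm2 : 3 ≤ m2) {i : ℕ} (hi : i < m1 - 1) :
    min (i + 1) (m1 - 1 - i) + m2 / 2 ≤
      max ((m1 + m2 - 1) / 2)
        (min (gg1 m1 m2 i + 1) (m1 + m2 - 2 - gg1 m1 m2 i) + 1) := by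
  unfold gg1; split_ifs <;> omega

private lemma gg2_beta (hm1 : 3 ≤ m1) (hm2 : 3 ≤ m2) {j : ℕ} (hj : j < m2 - 1) :
    min (j + 1) (m2 - 1 - j) + m1 / 2 ≤
      max ((m1 + m2 - 1) / 2)
        (min (gg2 m1 m2 j + 1) (m1 + m2 - 2 - gg2 m1 m2 j) + 1) := by
  unfold gg2; split_ifs <;> omega

private def phiMap (m1 m2 : ℕ) (hm1 : 3 ≤ m1) (hm2 : 3 ≤ m2) :
    Fin (m1 - 1) ⊕ Fin (m2 - 1) → Fin (m1 + m2 - 1 - 1)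
  | .inl i => ⟨gg1 m1 m2 i.val, by have := gg1_lt hm1 hm2 i.isLt; omega⟩
  | .inr j => ⟨gg2 m1 m2 j.val, by have := gg2_lt hm1 hm2 j.isLt; omega⟩

private lemma phiMap_inj (hm1 : 3 ≤ m1) (hm2 : 3 ≤ m2) :
    Function.Injective (phiMap m1 m2 hm1 hm2) := by
  intro a b hab
  rcases a with i | j <;> rcases b with i' | j' <;>
    simp only [phiMap, Fin.mk.injEq] at hab
  · exact congrArg Sum.inl (Fin.ext (gg1_inj hm1 hm2 i.isLt i'.isLt hab))
  · exact absurd hab (gg12_ne hm1 hm2 i.isLt j'.isLt)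
  · exact absurd hab.symm (gg12_ne hm1 hm2 i'.isLt j.isLt)
  · exact congrArg Sum.inr (Fin.ext (gg2_inj hm1 hm2 j.isLt j'.isLt hab))

/-! ### Eccentricity lower bounds in `glueOneCycle` -/

private lemma far_ecc [Fintype V] (hH : H.Connected) (hm : 5 ≤ M) (u0 : V) (hu0 : u0 ≠ w)
    (q : Fin (M - 1)) : M / 2 ≤ ecc (glueOneCycle H w M) (.inr q) := by
  have hq := q.isLt
  by_cases hc1 : q.val + M / 2 ≤ M - 2
  · have hlow := d2low (w := w) hH q (.inr ⟨q.val + M / 2, by omega⟩)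
    simp only [pot2, Fin.val_mk] at hlow
    have hle := le_ecc' (glueOneCycle H w M) (.inr q) (.inr ⟨q.val + M / 2, by omega⟩)
    omega
  · by_cases hc2 : M / 2 ≤ q.val
    · have hlow := d2low (w := w) hH q (.inr ⟨q.val - M / 2, by omega⟩)
      simp only [pot2, Fin.val_mk] at hlow
      have hle := le_ecc' (glueOneCycle H w M) (.inr q) (.inr ⟨q.val - M / 2, by omega⟩)
      omega
    · have hlow := d2low (w := w) hH q (.inl u0)
      simp only [pot2] at hlow
      have hd : 0 < H.dist w u0 := hH.pos_dist_of_ne (Ne.symm hu0)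
      have hle := le_ecc' (glueOneCycle H w M) (.inr q) (.inl u0)
      omega

private lemma plus_ecc [Fintype V] (hH : H.Connected) (q : Fin (M - 1)) (u : V) :
    min (q.val + 1) (M - 1 - q.val) + H.dist w u ≤ ecc (glueOneCycle H w M) (.inr q) := by
  have hlow := d2low (w := w) hH q (.inl u)
  simp only [pot2] at hlow
  exact le_trans hlow (le_ecc' _ _ _)

/-! ### The pointwise eccentricity comparisons -/

private lemma key0 [Fintype V] (hH : H.Connected) (hm1 : 3 ≤ m1) (hm2 : 3 ≤ m2) (v : V) :
    ecc (glueTwoCycles H w m1 m2) (.inl v) ≤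
      ecc (glueOneCycle H w (m1 + m2 - 1)) (.inl v) := by
  haveI : Nonempty (V ⊕ (Fin (m1 - 1) ⊕ Fin (m2 - 1))) := ⟨.inl w⟩
  have gc := gconn (w := w) (m1 := m1) (m2 := m2) hH
  apply ecc_le'
  intro y
  have htgt : (m1 + m2 - 1) / 2 - 1 < m1 + m2 - 1 - 1 := by omega
  have hlow := d1low (w := w) (M := m1 + m2 - 1) hH v (.inr ⟨(m1 + m2 - 1) / 2 - 1, htgt⟩)
  simp only [pot1, Fin.val_mk] at hlow
  have hle := le_ecc' (glueOneCycle H w (m1 + m2 - 1)) (.inl v)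
    (.inr ⟨(m1 + m2 - 1) / 2 - 1, htgt⟩)
  rcases y with u | (i | j)
  · have h1 := distG_inl (w := w) (m1 := m1) (m2 := m2) hH v u
    have h2 := d1low (w := w) (M := m1 + m2 - 1) hH v (.inl u)
    simp only [pot1] at h2
    have h3 := le_ecc' (glueOneCycle H w (m1 + m2 - 1)) (.inl v) (.inl u)
    omega
  · have ta := gc.dist_triangle (u := Sum.inl v) (v := Sum.inl w) (w := Sum.inr (Sum.inl i))
    have tb := distG_inl (w := w) (m1 := m1) (m2 := m2) hH v w
    have tc := ub1 (w := w) (m2 := m2) hH hm1 i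
    have hi := i.isLt
    omega
  · have ta := gc.dist_triangle (u := Sum.inl v) (v := Sum.inl w) (w := Sum.inr (Sum.inr j))
    have tb := distG_inl (w := w) (m1 := m1) (m2 := m2) hH v w
    have tc := ub2 (w := w) (m1 := m1) hH hm2 j
    have hj := j.isLt
    omega

private lemma key1 [Fintype V] (hH : H.Connected) (hm1 : 3 ≤ m1) (hm2 : 3 ≤ m2)
    (u0 : V) (hu0 : u0 ≠ w) (i : Fin (m1 - 1)) (q : Fin (m1 + m2 - 1 - 1))
    (hα : min (i.val + 1) (m1 - 1 - i.val) ≤ min (q.val + 1) (m1 + m2 - 2 - q.val))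
    (hβ : min (i.val + 1) (m1 - 1 - i.val) + m2 / 2 ≤
      max ((m1 + m2 - 1) / 2) (min (q.val + 1) (m1 + m2 - 2 - q.val) + 1)) :
    ecc (glueTwoCycles H w m1 m2) (.inr (.inl i)) ≤
      ecc (glueOneCycle H w (m1 + m2 - 1)) (.inr q) := by
  haveI : Nonempty (V ⊕ (Fin (m1 - 1) ⊕ Fin (m2 - 1))) := ⟨.inl w⟩
  have gc := gconn (w := w) (m1 := m1) (m2 := m2) hH
  have hfar := far_ecc (w := w) hH (by omega) u0 hu0 q
  have hplus := plus_ecc (M := m1 + m2 - 1) (w := w) hH q u0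
  have hd0 : 0 < H.dist w u0 := hH.pos_dist_of_ne (Ne.symm hu0)
  have hi := i.isLt
  have hq := q.isLt
  have tb : (glueTwoCycles H w m1 m2).dist (.inr (.inl i)) (.inl w) ≤
      min (i.val + 1) (m1 - 1 - i.val) := by
    rw [SimpleGraph.dist_comm]; exact ub1 (w := w) (m2 := m2) hH hm1 i
  apply ecc_le'
  intro y
  rcases y with u | (i' | j)
  · have ta := gc.dist_triangle (u := Sum.inr (Sum.inl i)) (v := Sum.inl w) (w := Sum.inl u)
    have tc := distG_inl (w := w) (m1 := m1) (m2 := m2) hH w u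
    have hpl := plus_ecc (M := m1 + m2 - 1) (w := w) hH q u
    omega
  · have ta := gc.dist_triangle (u := Sum.inr (Sum.inl i)) (v := Sum.inl w)
      (w := Sum.inr (Sum.inl i'))
    have tc := ub1 (w := w) (m2 := m2) hH hm1 i'
    have hi' := i'.isLt
    rcases le_or_gt i.val i'.val with hle | hlt
    · have hch := chain1 (w := w) (m2 := m2) hH (i'.val - i.val) i.val i'.val i.isLt i'.isLt
        (by omega)
      simp only [Fin.eta] at hch
      omega
    · have hch := chain1 (w := w) (m2 := m2) hH (i.val - i'.val) i'.val i.val i'.isLt i.isLt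
        (by omega)
      simp only [Fin.eta] at hch
      have hcm : (glueTwoCycles H w m1 m2).dist (.inr (.inl i)) (.inr (.inl i')) =
          (glueTwoCycles H w m1 m2).dist (.inr (.inl i')) (.inr (.inl i)) :=
        SimpleGraph.dist_comm
      omega
  · have ta := gc.dist_triangle (u := Sum.inr (Sum.inl i)) (v := Sum.inl w)
      (w := Sum.inr (Sum.inr j))
    have tc := ub2 (w := w) (m1 := m1) hH hm2 j
    have hj := j.isLt
    omega

private lemma key2 [Fintype V] (hH : H.Connected) (hm1 : 3 ≤ m1) (hm2 : 3 ≤ m2)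
    (u0 : V) (hu0 : u0 ≠ w) (j : Fin (m2 - 1)) (q : Fin (m1 + m2 - 1 - 1))
    (hα : min (j.val + 1) (m2 - 1 - j.val) ≤ min (q.val + 1) (m1 + m2 - 2 - q.val))
    (hβ : min (j.val + 1) (m2 - 1 - j.val) + m1 / 2 ≤
      max ((m1 + m2 - 1) / 2) (min (q.val + 1) (m1 + m2 - 2 - q.val) + 1)) :
    ecc (glueTwoCycles H w m1 m2) (.inr (.inr j)) ≤
      ecc (glueOneCycle H w (m1 + m2 - 1)) (.inr q) := by
  haveI : Nonempty (V ⊕ (Fin (m1 - 1) ⊕ Fin (m2 - 1))) := ⟨.inl w⟩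
  have gc := gconn (w := w) (m1 := m1) (m2 := m2) hH
  have hfar := far_ecc (w := w) hH (by omega) u0 hu0 q
  have hplus := plus_ecc (M := m1 + m2 - 1) (w := w) hH q u0
  have hd0 : 0 < H.dist w u0 := hH.pos_dist_of_ne (Ne.symm hu0)
  have hj := j.isLt
  have hq := q.isLt
  have tb : (glueTwoCycles H w m1 m2).dist (.inr (.inr j)) (.inl w) ≤
      min (j.val + 1) (m2 - 1 - j.val) := by
    rw [SimpleGraph.dist_comm]; exact ub2 (w := w) (m1 := m1) hH hm2 j
  apply ecc_le'
  intro y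
  rcases y with u | (i | j')
  · have ta := gc.dist_triangle (u := Sum.inr (Sum.inr j)) (v := Sum.inl w) (w := Sum.inl u)
    have tc := distG_inl (w := w) (m1 := m1) (m2 := m2) hH w u
    have hpl := plus_ecc (M := m1 + m2 - 1) (w := w) hH q u
    omega
  · have ta := gc.dist_triangle (u := Sum.inr (Sum.inr j)) (v := Sum.inl w)
      (w := Sum.inr (Sum.inl i))
    have tc := ub1 (w := w) (m2 := m2) hH hm1 i
    have hi := i.isLt
    omega
  · have ta := gc.dist_triangle (u := Sum.inr (Sum.inr j)) (v := Sum.inl w)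
      (w := Sum.inr (Sum.inr j'))
    have tc := ub2 (w := w) (m1 := m1) hH hm2 j'
    have hj' := j'.isLt
    rcases le_or_gt j.val j'.val with hle | hlt
    · have hch := chain2 (w := w) (m1 := m1) hH (j'.val - j.val) j.val j'.val j.isLt j'.isLt
        (by omega)
      simp only [Fin.eta] at hch
      omega
    · have hch := chain2 (w := w) (m1 := m1) hH (j.val - j'.val) j'.val j.val j'.isLt j.isLt
        (by omega)
      simp only [Fin.eta] at hch
      have hcm : (glueTwoCycles H w m1 m2).dist (.inr (.inr j)) (.inr (.inr j')) =
          (glueTwoCycles H w m1 m2).dist (.inr (.inr j')) (.inr (.inr j)) :=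
        SimpleGraph.dist_comm
      omega

end StmtSixteenAux

-- STATEMENT 16
theorem stmt16 {V : Type*} [Fintype V] (H : SimpleGraph V) (hH : H.Connected)
    (hV : 2 ≤ Fintype.card V) (w : V) (m1 m2 : ℕ) (h1 : 3 ≤ m1) (h2 : 3 ≤ m2) :
    totalEcc (glueTwoCycles H w m1 m2) ≤ totalEcc (glueOneCycle H w (m1 + m2 - 1)) := by
  classical
  obtain ⟨u0, hu0⟩ := Fintype.exists_ne_of_one_lt_card (by omega) w
  unfold totalEcc
  refine sum_le_sum_inj (Sum.map id (phiMap m1 m2 h1 h2))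
    (Function.Injective.sumMap Function.injective_id (phiMap_inj h1 h2)) _ _ ?_
  intro x
  rcases x with v | (i | j)
  · exact key0 hH h1 h2 v
  · exact key1 hH h1 h2 u0 hu0 i (phiMap m1 m2 h1 h2 (.inl i))
      (gg1_alpha h1 h2 i.isLt) (gg1_beta h1 h2 i.isLt)
  · exact key2 hH h1 h2 u0 hu0 j (phiMap m1 m2 h1 h2 (.inr j))
      (gg2_alpha h1 h2 j.isLt) (gg2_beta h1 h2 j.isLt)
end
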